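/- arXiv:1301.2606 — 2 statements merged into one kernel-verified Lean document; each statement's English description precedes it below -/
import Mathlib

section
/- Let p and q be affine invariant points on 𝒦ₙ and suppose p is proper. For K ∈ 𝒦ₙ define φ_q(K) = inf{t ≥ 0 : q(K) − p(K) ∈ t(K − p(K))}. Then: φ_q: 𝒦ₙ → ℝ₊ is continuous; there exists a constant c = c(q) > 0 such that q(K) − p(K) ∈ c(K − p(K)) for every K ∈ 𝒦ₙ; and if moreover q is proper, then c can be chosen in (0,1). -/
open scoped Pointwise
open MeasureTheory

noncomputable section

/-- Euclidean space `ℝⁿ`. -/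
abbrev EucSp (n : ℕ) := EuclideanSpace ℝ (Fin n)

/-- The space `𝒦ₙ` of convex bodies in `ℝⁿ`: compact convex sets with nonempty interior,
equipped (as a subtype of `ConvexBody`) with the Hausdorff metric. -/
def Kn (n : ℕ) : Type :=
  {K : ConvexBody (EucSp n) // (interior (K : Set (EucSp n))).Nonempty}

noncomputable instance (n : ℕ) : MetricSpace (Kn n) :=
  Subtype.metricSpace

/-- The underlying set of a convex body in `𝒦ₙ`. -/
def Kn.toSet {n : ℕ} (K : Kn n) : Set (EucSp n) := (K.1 : Set (EucSp n))

/-- An affine equivalence of `ℝⁿ` as a homeomorphism. -/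
def affEquivHomeo {n : ℕ} (T : EucSp n ≃ᵃ[ℝ] EucSp n) : EucSp n ≃ₜ EucSp n where
  toEquiv := T.toEquiv
  continuous_toFun := T.toAffineMap.continuous_of_finiteDimensional
  continuous_invFun := T.symm.toAffineMap.continuous_of_finiteDimensional

/-- The image of a convex body under an invertible affine map, as a convex body. -/
def affImage {n : ℕ} (T : EucSp n ≃ᵃ[ℝ] EucSp n) (K : Kn n) : Kn n :=
  ⟨⟨(T : EucSp n → EucSp n) '' K.toSet,
    (K.1.convex.affine_image T.toAffineMap : Convex ℝ ((T : EucSp n → EucSp n) '' K.toSet)),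
    K.1.isCompact.image (affEquivHomeo T).continuous,
    K.1.nonempty.image _⟩,
    by
      obtain ⟨x, hx⟩ := K.2
      exact ⟨T x, ((affEquivHomeo T).image_interior (K.1 : Set (EucSp n))) ▸
        Set.mem_image_of_mem _ hx⟩⟩

/-- An affine invariant point: a continuous map `p : 𝒦ₙ → ℝⁿ` such that
`p (T K) = T (p K)` for every invertible affine map `T`. -/
def IsAffineInvariantPoint {n : ℕ} (p : Kn n → EucSp n) : Prop :=
  Continuous p ∧ ∀ (T : EucSp n ≃ᵃ[ℝ] EucSp n) (K : Kn n), p (affImage T K) = T (p K)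

/-- An affine invariant set mapping: a continuous map `A : 𝒦ₙ → 𝒦ₙ` such that
`A (T K) = T (A K)` for every invertible affine map `T`. -/
def IsAffineInvariantSetMap {n : ℕ} (A : Kn n → Kn n) : Prop :=
  Continuous A ∧ ∀ (T : EucSp n ≃ᵃ[ℝ] EucSp n) (K : Kn n), A (affImage T K) = affImage T (A K)

/-- The centroid `g(S) = (∫_S x dx) / vol(S)` of a set `S ⊆ ℝⁿ`. -/
def centroid {n : ℕ} (S : Set (EucSp n)) : EucSp n :=
  (volume S).toReal⁻¹ • ∫ x in S, x

/-- `𝔓ₙ(K) = {p(K) : p ∈ 𝔓ₙ}`. -/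
def PnSet (n : ℕ) (K : Kn n) : Set (EucSp n) :=
  {x | ∃ p : Kn n → EucSp n, IsAffineInvariantPoint p ∧ p K = x}

end

noncomputable section AuxStmt3

open Metric Set

variable {n : ℕ}

/-- The translated body `K - p K`. -/
def KS (p : Kn n → EucSp n) (K : Kn n) : Set (EucSp n) :=
  (fun x => x - p K) '' K.toSet

lemma kn_convex (K : Kn n) : Convex ℝ K.toSet := K.1.convex
lemma kn_isCompact (K : Kn n) : IsCompact K.toSet := K.1.isCompact
lemma kn_isClosed (K : Kn n) : IsClosed K.toSet := K.1.isCompact.isClosed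
lemma kn_nonempty (K : Kn n) : K.toSet.Nonempty := K.1.nonempty

lemma kn_dist_eq (K L : Kn n) : dist K L = Metric.hausdorffDist K.toSet L.toSet := rfl

lemma kn_edist_ne_top (K L : Kn n) :
    EMetric.hausdorffEdist K.toSet L.toSet ≠ ⊤ :=
  Metric.hausdorffEdist_ne_top_of_nonempty_of_bounded (kn_nonempty K) (kn_nonempty L)
    (kn_isCompact K).isBounded (kn_isCompact L).isBounded

lemma kn_approx {K L : Kn n} {δ : ℝ} (h : dist K L < δ) :
    ∀ x ∈ K.toSet, ∃ y ∈ L.toSet, dist x y ≤ δ := by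
  intro x hx
  obtain ⟨y, hy, hxy⟩ := Metric.exists_dist_lt_of_hausdorffDist_lt hx
    (by rw [← kn_dist_eq]; exact h) (kn_edist_ne_top K L)
  exact ⟨y, hy, hxy.le⟩

lemma KS_eq (p : Kn n → EucSp n) (K : Kn n) :
    KS p K = (fun x => -(p K) + x) '' K.toSet := by
  unfold KS
  apply Set.image_congr'
  intro x
  rw [neg_add_eq_sub]

lemma KS_convex (p : Kn n → EucSp n) (K : Kn n) : Convex ℝ (KS p K) := by
  rw [KS_eq]
  exact (kn_convex K).translate _

lemma KS_isCompact (p : Kn n → EucSp n) (K : Kn n) : IsCompact (KS p K) :=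
  (kn_isCompact K).image (continuous_id.sub continuous_const)

lemma KS_isClosed (p : Kn n → EucSp n) (K : Kn n) : IsClosed (KS p K) :=
  (KS_isCompact p K).isClosed

lemma KS_nonempty (p : Kn n → EucSp n) (K : Kn n) : (KS p K).Nonempty :=
  (kn_nonempty K).image _

lemma zero_mem_KS {p : Kn n → EucSp n} {K : Kn n} (h : p K ∈ K.toSet) :
    (0 : EucSp n) ∈ KS p K :=
  ⟨p K, h, sub_self _⟩

lemma ball_subset_KS {p : Kn n → EucSp n} {K : Kn n} {r : ℝ}
    (h : closedBall (p K) r ⊆ K.toSet) : closedBall (0 : EucSp n) r ⊆ KS p K := by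
  intro y hy
  refine ⟨y + p K, h ?_, by show y + p K - p K = y; rw [add_sub_cancel_right]⟩
  rw [mem_closedBall, dist_eq_norm, add_sub_cancel_right]
  rw [mem_closedBall, dist_eq_norm, sub_zero] at hy
  exact hy

lemma mem_interior_KS {p q : Kn n → EucSp n} {K : Kn n}
    (h : q K ∈ interior K.toSet) : q K - p K ∈ interior (KS p K) := by
  have himg : KS p K = (Homeomorph.subRight (p K)) '' K.toSet := rfl
  rw [himg, ← Homeomorph.image_interior]
  exact Set.mem_image_of_mem _ h

lemma sInf_eq_gauge {s : Set (EucSp n)} (hs : s.Nonempty) (v : EucSp n) :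
    sInf {t : ℝ | 0 ≤ t ∧ v ∈ t • s} = gauge s v := by
  by_cases hv : v = 0
  · subst hv
    rw [gauge_zero]
    have h0 : (0 : ℝ) ∈ {t : ℝ | 0 ≤ t ∧ (0 : EucSp n) ∈ t • s} := by
      refine ⟨le_refl 0, ?_⟩
      rw [zero_smul_set hs]
      exact Set.zero_mem_zero
    refine le_antisymm (csInf_le ⟨0, fun t ht => ht.1⟩ h0) (le_csInf ⟨0, h0⟩ fun t ht => ht.1)
  · have hset : {t : ℝ | 0 ≤ t ∧ v ∈ t • s} = {t : ℝ | 0 < t ∧ v ∈ t • s} := by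
      ext t
      refine ⟨fun ht => ⟨?_, ht.2⟩, fun ht => ⟨ht.1.le, ht.2⟩⟩
      rcases ht.1.lt_or_eq with h | h
      · exact h
      · exfalso
        have := ht.2
        rw [← h, zero_smul_set hs] at this
        exact hv (Set.mem_zero.mp this)
    rw [hset]
    rfl

lemma subset_smul_of_approx {s t : Set (EucSp n)} {r ε : ℝ} (hs : Convex ℝ s)
    (hr : 0 < r) (hball : closedBall (0 : EucSp n) r ⊆ s) (hε : 0 ≤ ε)
    (h : ∀ x ∈ t, ∃ y ∈ s, dist x y ≤ ε) :
    t ⊆ (1 + ε / r) • s := by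
  intro x hx
  obtain ⟨y, hy, hxy⟩ := h x hx
  rw [dist_eq_norm] at hxy
  have hz : x - y ∈ (ε / r) • s := by
    rcases hε.lt_or_eq with hεpos | hε0
    · refine ⟨(r / ε) • (x - y), hball ?_, ?_⟩
      · rw [mem_closedBall, dist_eq_norm, sub_zero, norm_smul, Real.norm_eq_abs,
          abs_of_pos (div_pos hr hεpos)]
        calc r / ε * ‖x - y‖ ≤ r / ε * ε := by
              apply mul_le_mul_of_nonneg_left hxy (div_pos hr hεpos).le
          _ = r := by field_simp
      · show (ε / r) • ((r / ε) • (x - y)) = x - y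
        rw [smul_smul, div_mul_div_comm, mul_comm ε r, div_self (by positivity : r * ε ≠ 0),
          one_smul]
    · have hxy0 : x - y = 0 := by
        rw [← norm_le_zero_iff]
        rw [← hε0] at hxy
        exact hxy
      rw [hxy0, ← hε0, zero_div, zero_smul_set ⟨0, hball (mem_closedBall_self hr.le)⟩]
      exact Set.zero_mem_zero
  have hx' : x = y + (x - y) := by abel
  rw [hs.add_smul (by norm_num : (0:ℝ) ≤ 1) (div_nonneg hε hr.le)]
  rw [hx']
  exact Set.add_mem_add (by rwa [one_smul]) hz

lemma gauge_le_of_approx {s t : Set (EucSp n)} {r ε : ℝ} (hs : Convex ℝ s) (hr : 0 < r)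
    (hball : closedBall (0 : EucSp n) r ⊆ s) (hε : 0 ≤ ε) (habs : Absorbent ℝ t)
    (h : ∀ x ∈ t, ∃ y ∈ s, dist x y ≤ ε) (x : EucSp n) :
    gauge s x ≤ (1 + ε / r) * gauge t x := by
  have h1 : (0:ℝ) < 1 + ε / r := by positivity
  have h2 := gauge_mono habs (subset_smul_of_approx hs hr hball hε h) x
  rw [gauge_smul_left_of_nonneg h1.le] at h2
  rw [Pi.smul_apply, smul_eq_mul] at h2
  rw [← inv_mul_le_iff₀ h1]
  exact h2

lemma mem_smul_of_gauge_le {s : Set (EucSp n)} {v : EucSp n} {c : ℝ}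
    (hconv : Convex ℝ s) (h0 : s ∈ nhds (0 : EucSp n)) (hcl : IsClosed s)
    (hc : 0 < c) (h : gauge s v ≤ c) : v ∈ c • s := by
  have h1 : gauge s (c⁻¹ • v) ≤ 1 := by
    rw [gauge_smul_of_nonneg (inv_nonneg.mpr hc.le), smul_eq_mul]
    calc c⁻¹ * gauge s v ≤ c⁻¹ * c := by
          apply mul_le_mul_of_nonneg_left h (inv_nonneg.mpr hc.le)
      _ = 1 := inv_mul_cancel₀ hc.ne'
  have h2 := (gauge_le_one_iff_mem_closure hconv h0).mp h1
  rw [hcl.closure_eq] at h2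
  refine ⟨c⁻¹ • v, h2, ?_⟩
  show c • (c⁻¹ • v) = v
  rw [smul_smul, mul_inv_cancel₀ hc.ne', one_smul]

lemma closedBall_subset_of_approx {s t : Set (EucSp n)} {c : EucSp n} {a ε : ℝ}
    (ht : Convex ℝ t) (htc : IsClosed t) (hε : 0 ≤ ε)
    (hball : closedBall c a ⊆ s)
    (h : ∀ x ∈ s, ∃ y ∈ t, dist x y ≤ ε) :
    closedBall c (a - ε) ⊆ t := by
  intro u hu
  by_contra hut
  have hua : ‖u - c‖ ≤ a - ε := by
    rw [mem_closedBall, dist_eq_norm] at hu; exact hu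
  have ha' : (0:ℝ) ≤ a - ε := le_trans (norm_nonneg _) hua
  have ha : (0:ℝ) ≤ a := by linarith
  obtain ⟨f, v, hfv, hvu⟩ := geometric_hahn_banach_closed_point ht htc hut
  have key : ∀ w : EucSp n, ‖w‖ ≤ 1 → f c + a * f w ≤ v + ‖f‖ * ε := by
    intro w hw
    have hmem : c + a • w ∈ s := by
      apply hball
      rw [mem_closedBall, dist_eq_norm, add_sub_cancel_left, norm_smul, Real.norm_eq_abs,
        abs_of_nonneg ha]
      calc a * ‖w‖ ≤ a * 1 := mul_le_mul_of_nonneg_left hw ha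
        _ = a := mul_one a
    obtain ⟨y, hy, hxy⟩ := h _ hmem
    have h1 : f (c + a • w) - f y ≤ ‖f‖ * ε := by
      calc f (c + a • w) - f y = f (c + a • w - y) := by rw [map_sub]
        _ ≤ ‖f (c + a • w - y)‖ := le_trans (le_abs_self _) (le_of_eq (Real.norm_eq_abs _).symm)
        _ ≤ ‖f‖ * ‖c + a • w - y‖ := f.le_opNorm _
        _ ≤ ‖f‖ * ε := by
            apply mul_le_mul_of_nonneg_left _ (norm_nonneg f)
            rw [← dist_eq_norm]; exact hxy
    have h2 : f y < v := hfv y hy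
    have h3 : f (c + a • w) = f c + a * f w := by
      rw [map_add, f.map_smul, smul_eq_mul]
    linarith
  have hnorm : f c + a * ‖f‖ ≤ v + ‖f‖ * ε := by
    rcases ha.lt_or_eq with hapos | ha0
    · have hkey2 : ∀ η : ℝ, 0 < η → f c + a * ‖f‖ ≤ v + ‖f‖ * ε + a * η := by
        intro η hη
        rcases lt_or_ge (‖f‖ - η) 0 with hneg | hpos
        · have := key 0 (by simp)
          rw [map_zero, mul_zero, add_zero] at this
          nlinarith [norm_nonneg f]
        · obtain ⟨x, hx1, hx2⟩ := f.exists_lt_apply_of_lt_opNorm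
            (show ‖f‖ - η < ‖f‖ by linarith)
          set w : EucSp n := if 0 ≤ f x then x else -x with hwdef
          have hw1 : ‖w‖ ≤ 1 := by
            rw [hwdef]
            split_ifs
            · exact hx1.le
            · rw [norm_neg]; exact hx1.le
          have hw2 : ‖f‖ - η < f w := by
            rw [hwdef]
            rcases le_or_gt 0 (f x) with hfx | hfx
            · rw [if_pos hfx]
              rwa [Real.norm_eq_abs, abs_of_nonneg hfx] at hx2
            · rw [if_neg (not_le.mpr hfx), map_neg]
              rwa [Real.norm_eq_abs, abs_of_neg hfx] at hx2
          have := key w hw1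
          nlinarith
      by_contra hcon
      push_neg at hcon
      obtain ⟨η, hη, hcontr⟩ : ∃ η : ℝ, 0 < η ∧ v + ‖f‖ * ε + a * η < f c + a * ‖f‖ := by
        refine ⟨(f c + a * ‖f‖ - (v + ‖f‖ * ε)) / (2 * a),
          div_pos (by linarith) (by linarith), ?_⟩
        have hsimp : a * ((f c + a * ‖f‖ - (v + ‖f‖ * ε)) / (2 * a))
            = (f c + a * ‖f‖ - (v + ‖f‖ * ε)) / 2 := by
          rw [mul_div_assoc']
          rw [mul_comm a (f c + a * ‖f‖ - (v + ‖f‖ * ε)),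
            mul_div_mul_right _ _ (ne_of_gt hapos)]
        rw [hsimp]
        linarith
      exact absurd (hkey2 _ hη) (not_le.mpr hcontr)
    · have := key 0 (by simp)
      rw [map_zero, mul_zero, add_zero] at this
      rw [← ha0]
      simpa using this
  have hfu : f u ≤ f c + ‖f‖ * (a - ε) := by
    have h1 : f u - f c = f (u - c) := (map_sub f u c).symm
    have h2 : f (u - c) ≤ ‖f‖ * ‖u - c‖ :=
      le_trans (le_trans (le_abs_self _) (le_of_eq (Real.norm_eq_abs _).symm)) (f.le_opNorm _)
    have h3 : ‖f‖ * ‖u - c‖ ≤ ‖f‖ * (a - ε) :=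
      mul_le_mul_of_nonneg_left hua (norm_nonneg f)
    linarith
  linarith

set_option maxHeartbeats 1600000 in
/-- Continuity of `K ↦ gauge (K - p K) (q K - p K)`. -/
lemma phi_continuous {p q : Kn n → EucSp n}
    (hp : IsAffineInvariantPoint p) (hq : IsAffineInvariantPoint q)
    (hproper : ∀ K : Kn n, p K ∈ interior K.toSet) :
    Continuous (fun K : Kn n => gauge (KS p K) (q K - p K)) := by
  rw [Metric.continuous_iff]
  intro K₀ ε hε
  obtain ⟨r', hr', hball'⟩ := Metric.isOpen_iff.mp isOpen_interior (p K₀) (hproper K₀)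
  set r : ℝ := r' / 8 with hrdef
  have hrpos : 0 < r := by positivity
  have hball4 : closedBall (p K₀) (4 * r) ⊆ K₀.toSet := by
    refine subset_trans ?_ (hball'.trans interior_subset)
    apply closedBall_subset_ball
    rw [hrdef]; linarith
  set M : ℝ := gauge (KS p K₀) (q K₀ - p K₀) with hM
  have hM0 : 0 ≤ M := gauge_nonneg _
  set δ : ℝ := min r (r * ε / (2 * (1 + 2 * M))) with hδdef
  have hδpos : 0 < δ := by
    apply lt_min hrpos
    positivity
  have hδr : δ ≤ r := min_le_left _ _
  -- find a metric radius giving all three conditions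
  obtain ⟨δp, hδp, hδp'⟩ := Metric.continuous_iff.mp hp.1 K₀ δ hδpos
  obtain ⟨δq, hδq, hδq'⟩ := Metric.continuous_iff.mp hq.1 K₀ δ hδpos
  refine ⟨min δ (min δp δq), by positivity, ?_⟩
  intro K hK
  have hKK₀ : dist K K₀ < δ := lt_of_lt_of_le hK (min_le_left _ _)
  have hpp : ‖p K - p K₀‖ < δ := by
    rw [← dist_eq_norm]
    exact hδp' K (lt_of_lt_of_le hK (le_trans (min_le_right _ _) (min_le_left _ _)))
  have hqq : ‖q K - q K₀‖ < δ := by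
    rw [← dist_eq_norm]
    exact hδq' K (lt_of_lt_of_le hK (le_trans (min_le_right _ _) (min_le_right _ _)))
  -- ball inside K
  have hballK : closedBall (p K) (2 * r) ⊆ K.toSet := by
    have h1 : closedBall (p K₀) (4 * r - δ) ⊆ K.toSet := by
      apply closedBall_subset_of_approx (kn_convex K) (kn_isClosed K) hδpos.le hball4
      exact kn_approx (by rw [dist_comm]; exact hKK₀)
    intro y hy
    apply h1
    rw [mem_closedBall] at hy ⊢
    calc dist y (p K₀) ≤ dist y (p K) + dist (p K) (p K₀) := dist_triangle _ _ _
      _ ≤ 2 * r + δ := by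
          apply add_le_add hy
          rw [dist_eq_norm]; exact hpp.le
      _ ≤ 4 * r - δ := by linarith
  have hSK : closedBall (0 : EucSp n) (2 * r) ⊆ KS p K := ball_subset_KS hballK
  have hSK₀ : closedBall (0 : EucSp n) (2 * r) ⊆ KS p K₀ := by
    apply ball_subset_KS
    intro y hy
    apply hball4
    rw [mem_closedBall] at hy ⊢
    linarith
  have habsK : Absorbent ℝ (KS p K) :=
    absorbent_nhds_zero (Filter.mem_of_superset
      (Metric.closedBall_mem_nhds 0 (by positivity)) hSK)
  have habsK₀ : Absorbent ℝ (KS p K₀) :=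
    absorbent_nhds_zero (Filter.mem_of_superset
      (Metric.closedBall_mem_nhds 0 (by positivity)) hSK₀)
  -- mutual approximation of the translated bodies
  have hst : ∀ x ∈ KS p K, ∃ y ∈ KS p K₀, dist x y ≤ 2 * δ := by
    rintro x ⟨z, hz, rfl⟩
    obtain ⟨y', hy', hzy'⟩ := kn_approx hKK₀ z hz
    refine ⟨y' - p K₀, ⟨y', hy', rfl⟩, ?_⟩
    rw [dist_eq_norm]
    have heq : z - p K - (y' - p K₀) = (z - y') + (p K₀ - p K) := by abel
    rw [heq]
    calc ‖(z - y') + (p K₀ - p K)‖ ≤ ‖z - y'‖ + ‖p K₀ - p K‖ := norm_add_le _ _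
      _ ≤ δ + δ := by
          apply add_le_add
          · rw [← dist_eq_norm]; exact hzy'
          · rw [norm_sub_rev]; exact hpp.le
      _ = 2 * δ := by ring
  have hts : ∀ x ∈ KS p K₀, ∃ y ∈ KS p K, dist x y ≤ 2 * δ := by
    rintro x ⟨z, hz, rfl⟩
    obtain ⟨y', hy', hzy'⟩ := kn_approx (show dist K₀ K < δ by rwa [dist_comm]) z hz
    refine ⟨y' - p K, ⟨y', hy', rfl⟩, ?_⟩
    rw [dist_eq_norm]
    have heq : z - p K₀ - (y' - p K) = (z - y') + (p K - p K₀) := by abel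
    rw [heq]
    calc ‖(z - y') + (p K - p K₀)‖ ≤ ‖z - y'‖ + ‖p K - p K₀‖ := norm_add_le _ _
      _ ≤ δ + δ := by
          apply add_le_add
          · rw [← dist_eq_norm]; exact hzy'
          · exact hpp.le
      _ = 2 * δ := by ring
  -- gauge comparisons
  set A : ℝ := gauge (KS p K) (q K - p K) with hA
  set B : ℝ := gauge (KS p K) (q K₀ - p K₀) with hB
  have hratio : 2 * δ / (2 * r) = δ / r := by
    rw [mul_div_mul_left δ r (by norm_num : (2:ℝ) ≠ 0)]
  -- Lipschitz estimate
  have hlip : |A - B| ≤ δ / r := by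
    set ρ : NNReal := ⟨2 * r, by positivity⟩ with hρ
    have hρpos : 0 < ρ := by
      rw [← NNReal.coe_lt_coe]
      show (0:ℝ) < 2 * r
      positivity
    have hlw := Convex.lipschitzWith_gauge (KS_convex p K) hρpos
      (le_trans ball_subset_closedBall hSK)
    have h1 := hlw.dist_le_mul (q K - p K) (q K₀ - p K₀)
    rw [Real.dist_eq] at h1
    have h2 : dist (q K - p K) (q K₀ - p K₀) ≤ 2 * δ := by
      rw [dist_eq_norm]
      have heq : q K - p K - (q K₀ - p K₀) = (q K - q K₀) + (p K₀ - p K) := by abel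
      rw [heq]
      calc ‖(q K - q K₀) + (p K₀ - p K)‖ ≤ ‖q K - q K₀‖ + ‖p K₀ - p K‖ := norm_add_le _ _
        _ ≤ δ + δ := by
            apply add_le_add hqq.le
            rw [norm_sub_rev]; exact hpp.le
        _ = 2 * δ := by ring
    have hcoe : ((ρ⁻¹ : NNReal) : ℝ) = (2 * r)⁻¹ := by
      rw [NNReal.coe_inv]
      rfl
    calc |A - B| ≤ ((ρ⁻¹ : NNReal) : ℝ) * dist (q K - p K) (q K₀ - p K₀) := h1
      _ ≤ (2 * r)⁻¹ * (2 * δ) := by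
          rw [hcoe]
          apply mul_le_mul_of_nonneg_left h2 (by positivity)
      _ = δ / r := by rw [inv_mul_eq_div, mul_div_mul_left δ r two_ne_zero]
  -- comparison of gauges in the set argument
  have hBM : B ≤ (1 + δ / r) * M := by
    have := gauge_le_of_approx (KS_convex p K) (by positivity : (0:ℝ) < 2 * r) hSK
      (by positivity : (0:ℝ) ≤ 2 * δ) habsK₀ hts (q K₀ - p K₀)
    rwa [hratio] at this
  have hMB : M ≤ (1 + δ / r) * B := by
    have := gauge_le_of_approx (KS_convex p K₀) (by positivity : (0:ℝ) < 2 * r) hSK₀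
      (by positivity : (0:ℝ) ≤ 2 * δ) habsK hst (q K₀ - p K₀)
    rwa [hratio] at this
  have hB0 : 0 ≤ B := gauge_nonneg _
  have hδrle : δ / r ≤ 1 := by
    rw [div_le_one hrpos]; exact hδr
  have hBMabs : |B - M| ≤ δ / r * (2 * M) := by
    rw [abs_le]
    constructor
    · -- -(δ/r * 2M) ≤ B - M, i.e. M - B ≤ δ/r * 2M
      have h1 : M - B ≤ δ / r * B := by nlinarith
      have h2 : B ≤ (1 + δ / r) * M := hBM
      nlinarith
    · nlinarith
  -- conclude
  rw [Real.dist_eq]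
  have htot : |A - M| ≤ δ / r * (1 + 2 * M) := by
    calc |A - M| ≤ |A - B| + |B - M| := abs_sub_le _ _ _
      _ ≤ δ / r + δ / r * (2 * M) := add_le_add hlip hBMabs
      _ = δ / r * (1 + 2 * M) := by ring
  have hfin : δ / r * (1 + 2 * M) < ε := by
    have hδ2 : δ ≤ r * ε / (2 * (1 + 2 * M)) := min_le_right _ _
    have h12M : (1:ℝ) + 2 * M ≠ 0 := by positivity
    rw [div_mul_eq_mul_div, div_lt_iff₀ hrpos]
    calc δ * (1 + 2 * M) ≤ r * ε / (2 * (1 + 2 * M)) * (1 + 2 * M) :=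
          mul_le_mul_of_nonneg_right hδ2 (by positivity)
      _ = r * ε / 2 := by
          field_simp
      _ = ε * r / 2 := by ring
      _ < ε * r := by
          have hh := mul_pos hε hrpos
          linarith
  exact lt_of_le_of_lt htot hfin

lemma gauge_image_linearEquiv (L : EucSp n ≃ₗ[ℝ] EucSp n) (s : Set (EucSp n)) (v : EucSp n) :
    gauge (⇑L '' s) (L v) = gauge s v := by
  have key : ∀ t : ℝ, (L v ∈ t • (⇑L '' s) ↔ v ∈ t • s) := by
    intro t
    have himg : t • (⇑L '' s) = ⇑L '' (t • s) := by
      ext w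
      constructor
      · rintro ⟨u, ⟨y, hy, rfl⟩, rfl⟩
        exact ⟨t • y, smul_mem_smul_set hy, map_smul L t y⟩
      · rintro ⟨u, ⟨y, hy, rfl⟩, rfl⟩
        exact ⟨L y, Set.mem_image_of_mem _ hy, (map_smul L t y).symm⟩
    rw [himg]
    exact Function.Injective.mem_set_image L.injective
  rw [gauge_def, gauge_def]
  congr 1
  ext t
  simp only [Set.mem_sep_iff, Set.mem_Ioi, key]

lemma affine_sub (T : EucSp n ≃ᵃ[ℝ] EucSp n) (x y : EucSp n) :
    T x - T y = T.linear (x - y) := by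
  have h := T.toAffineMap.linearMap_vsub x y
  simp only [vsub_eq_sub, AffineEquiv.coe_toAffineMap] at h
  rw [← h]
  congr 1

lemma affImage_toSet (T : EucSp n ≃ᵃ[ℝ] EucSp n) (K : Kn n) :
    (affImage T K).toSet = ⇑T '' K.toSet := rfl

lemma phi_affImage {p q : Kn n → EucSp n}
    (hp : IsAffineInvariantPoint p) (hq : IsAffineInvariantPoint q)
    (T : EucSp n ≃ᵃ[ℝ] EucSp n) (K : Kn n) :
    gauge (KS p (affImage T K)) (q (affImage T K) - p (affImage T K))
      = gauge (KS p K) (q K - p K) := by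
  have hset : KS p (affImage T K) = ⇑(T.linear) '' KS p K := by
    unfold KS
    rw [affImage_toSet, hp.2 T K]
    ext w
    constructor
    · rintro ⟨y, ⟨x, hx, rfl⟩, rfl⟩
      exact ⟨x - p K, ⟨x, hx, rfl⟩, (affine_sub T x (p K)).symm⟩
    · rintro ⟨u, ⟨x, hx, rfl⟩, rfl⟩
      exact ⟨T x, ⟨x, hx, rfl⟩, affine_sub T x (p K)⟩
  have hv : q (affImage T K) - p (affImage T K) = T.linear (q K - p K) := by
    rw [hp.2 T K, hq.2 T K]
    exact affine_sub T (q K) (p K)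
  rw [hset, hv]
  exact gauge_image_linearEquiv T.linear (KS p K) (q K - p K)

lemma limit_convex {s : ℕ → Set (EucSp n)} {S : Set (EucSp n)}
    (hSc : IsClosed S) (hSne : S.Nonempty)
    (hconv : ∀ m, Convex ℝ (s m)) (hne : ∀ m, (s m).Nonempty)
    (hfin : ∀ m, EMetric.hausdorffEdist (s m) S ≠ ⊤)
    (h : Filter.Tendsto (fun m => Metric.hausdorffDist (s m) S) Filter.atTop (nhds 0)) :
    Convex ℝ S := by
  intro x hx y hy a b ha hb hab
  have hz : ∀ ε : ℝ, 0 < ε → ∃ w ∈ S, dist (a • x + b • y) w < ε := by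
    intro ε hε
    obtain ⟨N, hN⟩ := (Metric.tendsto_atTop.mp h) (ε/2) (by positivity)
    have hNN := hN N le_rfl
    rw [Real.dist_eq, sub_zero, abs_of_nonneg Metric.hausdorffDist_nonneg] at hNN
    obtain ⟨x', hx', hxx⟩ := Metric.exists_dist_lt_of_hausdorffDist_lt' hx hNN (hfin N)
    obtain ⟨y', hy', hyy⟩ := Metric.exists_dist_lt_of_hausdorffDist_lt' hy hNN (hfin N)
    have hz' : a • x' + b • y' ∈ s N := hconv N hx' hy' ha hb hab
    obtain ⟨w, hw, hzw⟩ := Metric.exists_dist_lt_of_hausdorffDist_lt hz' hNN (hfin N)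
    refine ⟨w, hw, ?_⟩
    have hd : dist (a • x + b • y) (a • x' + b • y') ≤ ε/2 := by
      calc dist (a • x + b • y) (a • x' + b • y')
          ≤ dist (a • x) (a • x') + dist (b • y) (b • y') := dist_add_add_le _ _ _ _
        _ = |a| * dist x x' + |b| * dist y y' := by
            rw [dist_smul₀, dist_smul₀, Real.norm_eq_abs, Real.norm_eq_abs]
        _ ≤ a * (ε/2) + b * (ε/2) := by
            rw [abs_of_nonneg ha, abs_of_nonneg hb]
            have hx2 : dist x x' ≤ ε/2 := by
              rw [dist_comm]; exact hxx.le
            have hy2 : dist y y' ≤ ε/2 := by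
              rw [dist_comm]; exact hyy.le
            exact add_le_add (mul_le_mul_of_nonneg_left hx2 ha)
              (mul_le_mul_of_nonneg_left hy2 hb)
        _ = ε/2 := by rw [← add_mul, hab, one_mul]
    calc dist (a • x + b • y) w
        ≤ dist (a • x + b • y) (a • x' + b • y') + dist (a • x' + b • y') w :=
          dist_triangle _ _ _
      _ < ε/2 + ε/2 := by
          apply add_lt_add_of_le_of_lt hd hzw
      _ = ε := by ring
  have hcl : a • x + b • y ∈ closure S := Metric.mem_closure_iff.mpr hz
  rwa [hSc.closure_eq] at hcl

lemma limit_superset {s : ℕ → Set (EucSp n)} {S t : Set (EucSp n)}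
    (hSc : IsClosed S) (hSne : S.Nonempty)
    (hfin : ∀ m, EMetric.hausdorffEdist (s m) S ≠ ⊤)
    (hsub : ∀ m, t ⊆ s m)
    (h : Filter.Tendsto (fun m => Metric.hausdorffDist (s m) S) Filter.atTop (nhds 0)) :
    t ⊆ S := by
  intro x hx
  have hinf : ∀ m, Metric.infDist x S ≤ Metric.hausdorffDist (s m) S :=
    fun m => Metric.infDist_le_hausdorffDist_of_mem (hsub m hx) (hfin m)
  have h0 : Metric.infDist x S ≤ 0 :=
    ge_of_tendsto h (Filter.Eventually.of_forall hinf)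
  have h1 : Metric.infDist x S = 0 := le_antisymm h0 Metric.infDist_nonneg
  have h2 : x ∈ closure S := (Metric.mem_closure_iff_infDist_zero hSne).mpr h1
  rwa [hSc.closure_eq] at h2

/-! ### Compactness of a normalized family -/

open TopologicalSpace in
lemma isCompact_Dset (r R : ℝ) (hr : 0 < r) :
    IsCompact {K : Kn n | closedBall (0 : EucSp n) r ⊆ K.toSet ∧
      K.toSet ⊆ closedBall (0 : EucSp n) R} := by
  classical
  set D : Set (Kn n) := {K : Kn n | closedBall (0 : EucSp n) r ⊆ K.toSet ∧
      K.toSet ⊆ closedBall (0 : EucSp n) R} with hD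
  set α : Set (EucSp n) := closedBall (0 : EucSp n) R with hα
  haveI : CompactSpace α := isCompact_iff_compactSpace.mp (isCompact_closedBall _ _)
  set F : NonemptyCompacts α → NonemptyCompacts (EucSp n) :=
    fun A => ⟨⟨Subtype.val '' (A : Set α), A.isCompact.image continuous_subtype_val⟩,
      A.nonempty.image _⟩ with hF
  have hFcoe : ∀ A : NonemptyCompacts α, (F A : Set (EucSp n)) = Subtype.val '' (A : Set α) :=
    fun A => rfl
  have hFiso : Isometry F := by
    apply Isometry.of_dist_eq
    intro A B
    rw [Metric.NonemptyCompacts.dist_eq, Metric.NonemptyCompacts.dist_eq, hFcoe, hFcoe]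
    exact Metric.hausdorffDist_image isometry_subtype_coe
  set C : Set (NonemptyCompacts α) := {A | Convex ℝ (Subtype.val '' (A : Set α)) ∧
      closedBall (0 : EucSp n) r ⊆ Subtype.val '' (A : Set α)} with hC
  -- C is closed
  have hCclosed : IsClosed C := by
    apply IsSeqClosed.isClosed
    intro A A₀ hmem htend
    have htd : Filter.Tendsto
        (fun m => Metric.hausdorffDist (Subtype.val '' ((A m : Set α)))
          (Subtype.val '' ((A₀ : Set α)))) Filter.atTop (nhds 0) := by
      have : ∀ m, Metric.hausdorffDist (Subtype.val '' ((A m : Set α)))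
          (Subtype.val '' ((A₀ : Set α))) = dist (A m) A₀ := by
        intro m
        rw [Metric.NonemptyCompacts.dist_eq]
        exact Metric.hausdorffDist_image isometry_subtype_coe
      simp only [this]
      exact tendsto_iff_dist_tendsto_zero.mp htend
    have hfin : ∀ m, EMetric.hausdorffEdist (Subtype.val '' ((A m : Set α)))
        (Subtype.val '' ((A₀ : Set α))) ≠ ⊤ := by
      intro m
      apply Metric.hausdorffEdist_ne_top_of_nonempty_of_bounded
      · exact (A m).nonempty.image _
      · exact A₀.nonempty.image _
      · exact ((A m).isCompact.image continuous_subtype_val).isBounded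
      · exact (A₀.isCompact.image continuous_subtype_val).isBounded
    have hcl : IsClosed (Subtype.val '' ((A₀ : Set α))) :=
      (A₀.isCompact.image continuous_subtype_val).isClosed
    have hne : (Subtype.val '' ((A₀ : Set α))).Nonempty := A₀.nonempty.image _
    constructor
    · exact limit_convex hcl hne (fun m => (hmem m).1) (fun m => (A m).nonempty.image _)
        hfin htd
    · exact limit_superset hcl hne hfin (fun m => (hmem m).2) htd
  have hCcomp : IsCompact C := hCclosed.isCompact
  -- j embeds Kn into nonempty compacts
  set j : Kn n → NonemptyCompacts (EucSp n) :=
    fun K => ⟨⟨K.toSet, kn_isCompact K⟩, kn_nonempty K⟩ with hj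
  have hjcoe : ∀ K : Kn n, (j K : Set (EucSp n)) = K.toSet := fun K => rfl
  have hjiso : Isometry j := by
    apply Isometry.of_dist_eq
    intro K L
    rw [Metric.NonemptyCompacts.dist_eq, hjcoe, hjcoe]
    rfl
  have himg : j '' D = F '' C := by
    ext A
    constructor
    · rintro ⟨K, ⟨hK1, hK2⟩, rfl⟩
      have hsub : K.toSet ⊆ α := hK2
      set B : NonemptyCompacts α := ⟨⟨Subtype.val ⁻¹' K.toSet,
        ((kn_isClosed K).preimage continuous_subtype_val).isCompact⟩,
        by obtain ⟨x, hx⟩ := kn_nonempty K; exact ⟨⟨x, hsub hx⟩, hx⟩⟩ with hBdef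
      have hval : Subtype.val '' (B : Set α) = K.toSet := by
        show Subtype.val '' (Subtype.val ⁻¹' K.toSet : Set α) = K.toSet
        rw [Subtype.image_preimage_coe]
        exact Set.inter_eq_self_of_subset_right hsub
      refine ⟨B, ⟨?_, ?_⟩, ?_⟩
      · rw [hval]; exact kn_convex K
      · rw [hval]; exact hK1
      · apply NonemptyCompacts.ext
        rw [hFcoe, hjcoe, hval]
    · rintro ⟨B, hB, rfl⟩
      have hconv : Convex ℝ (Subtype.val '' (B : Set α)) := hB.1
      have hball : closedBall (0 : EucSp n) r ⊆ Subtype.val '' (B : Set α) := hB.2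
      set K : Kn n := ⟨⟨Subtype.val '' (B : Set α), hconv,
        B.isCompact.image continuous_subtype_val, B.nonempty.image _⟩,
        ⟨0, mem_interior.mpr ⟨ball (0 : EucSp n) r,
          (ball_subset_closedBall).trans hball, isOpen_ball, mem_ball_self hr⟩⟩⟩ with hKdef
      refine ⟨K, ⟨?_, ?_⟩, ?_⟩
      · exact hball
      · show Subtype.val '' (B : Set α) ⊆ closedBall (0 : EucSp n) R
        rintro x ⟨y, _, rfl⟩
        exact y.2
      · apply NonemptyCompacts.ext
        rfl
  have hjinj : Function.Injective j := by
    intro K L h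
    have : K.toSet = L.toSet := by
      rw [← hjcoe K, ← hjcoe L, h]
    exact Subtype.ext (ConvexBody.ext this)
  have hemb := hjiso.isEmbedding
  rw [hemb.isCompact_iff, himg]
  exact hCcomp.image hFiso.continuous

/-! ### Normalization: every body has an affine image between two fixed balls -/

lemma euclid_abs_coord_le_norm (x : EucSp n) (i : Fin n) : |x i| ≤ ‖x‖ := by
  rw [EuclideanSpace.norm_eq, ← Real.sqrt_sq_eq_abs]
  apply Real.sqrt_le_sqrt
  have h : x i ^ 2 = ‖x i‖ ^ 2 := by rw [Real.norm_eq_abs, sq_abs]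
  rw [h]
  exact Finset.single_le_sum (f := fun j => ‖x j‖ ^ 2) (fun j _ => sq_nonneg _)
    (Finset.mem_univ i)

lemma euclid_norm_le_of_coords {x : EucSp n} {b : ℝ} (hb : 0 ≤ b)
    (h : ∀ i, |x i| ≤ b) : ‖x‖ ≤ Real.sqrt n * b := by
  rw [EuclideanSpace.norm_eq]
  have h1 : ∑ i : Fin n, ‖x i‖ ^ 2 ≤ (n : ℝ) * b ^ 2 := by
    calc ∑ i : Fin n, ‖x i‖ ^ 2 ≤ ∑ _i : Fin n, b ^ 2 := by
          apply Finset.sum_le_sum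
          intro i _
          rw [Real.norm_eq_abs]
          exact pow_le_pow_left₀ (abs_nonneg _) (h i) 2
      _ = (n : ℝ) * b ^ 2 := by
          rw [Finset.sum_const, Finset.card_univ, Fintype.card_fin, nsmul_eq_mul]
  calc Real.sqrt (∑ i : Fin n, ‖x i‖ ^ 2) ≤ Real.sqrt ((n : ℝ) * b ^ 2) :=
        Real.sqrt_le_sqrt h1
    _ = Real.sqrt n * b := by
        rw [Real.sqrt_mul (Nat.cast_nonneg n), Real.sqrt_sq hb]

/-- Inner radius for the normalized position. -/
def rLow (n : ℕ) : ℝ := 1 / (2 * (n + 1) * (1 + Real.sqrt n))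
/-- Outer radius for the normalized position. -/
def rHigh (n : ℕ) : ℝ := 2 * Real.sqrt n + 2

lemma rLow_pos (n : ℕ) : 0 < rLow n := by
  unfold rLow
  have h := Real.sqrt_nonneg (n : ℝ)
  positivity

lemma rHigh_pos (n : ℕ) : 0 < rHigh n := by
  unfold rHigh
  have h := Real.sqrt_nonneg (n : ℝ)
  positivity

lemma rLow_le_rHigh (n : ℕ) : rLow n ≤ rHigh n := by
  have h := Real.sqrt_nonneg (n : ℝ)
  have hn : (0:ℝ) ≤ (n:ℝ) := Nat.cast_nonneg n
  have h1 : rLow n ≤ 1/2 := by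
    unfold rLow
    apply one_div_le_one_div_of_le two_pos
    nlinarith
  have h2 : (2:ℝ) ≤ rHigh n := by
    unfold rHigh
    linarith
  linarith

set_option maxHeartbeats 1600000 in
lemma exists_normalized (K : Kn n) :
    ∃ T : EucSp n ≃ᵃ[ℝ] EucSp n,
      closedBall (0 : EucSp n) (rLow n) ⊆ (affImage T K).toSet ∧
      (affImage T K).toSet ⊆ closedBall (0 : EucSp n) (rHigh n) := by
  classical
  obtain ⟨x₀, hx₀⟩ := K.2
  obtain ⟨ρ, hρ, hballρ⟩ := Metric.isOpen_iff.mp isOpen_interior x₀ hx₀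
  have hballρK : ball x₀ ρ ⊆ K.toSet := hballρ.trans interior_subset
  set e : Module.Basis (Fin n) ℝ (EucSp n) := (EuclideanSpace.basisFun (Fin n) ℝ).toBasis with he
  have hnorm_e : ∀ i, ‖e i‖ = 1 := by
    intro i
    rw [he, OrthonormalBasis.coe_toBasis, EuclideanSpace.basisFun_apply,
      EuclideanSpace.norm_single, norm_one]
  set f : (Fin (n+1) → EucSp n) → ℝ := fun v => |e.det (fun j => v j.succ - v 0)| with hf
  have hfc : Continuous f := by
    have h1 : Continuous fun w : Fin n → EucSp n => e.det w := by
      have heq : (fun w : Fin n → EucSp n => e.det w) = fun w => (e.toMatrix w).det := by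
        funext w
        rw [Module.Basis.det_apply]
      rw [heq]
      apply Continuous.matrix_det
      apply continuous_matrix
      intro i j
      simp only [Module.Basis.toMatrix_apply, ← Module.Basis.coord_apply]
      exact ((e.coord i).continuous_of_finiteDimensional).comp (continuous_apply j)
    apply continuous_abs.comp
    exact h1.comp (continuous_pi fun j =>
      (continuous_apply (Fin.succ j)).sub (continuous_apply 0))
  set P : Set (Fin (n+1) → EucSp n) := Set.univ.pi (fun _ => K.toSet) with hP
  have hPc : IsCompact P := isCompact_univ_pi fun _ => kn_isCompact K
  have hPne : P.Nonempty := ⟨fun _ => x₀, fun _ _ => interior_subset hx₀⟩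
  obtain ⟨v, hvP, hvmax⟩ := hPc.exists_isMaxOn hPne hfc.continuousOn
  have hvmem : ∀ j, v j ∈ K.toSet := fun j => hvP j (Set.mem_univ j)
  -- positivity of the maximal determinant
  set w₀ : Fin (n+1) → EucSp n := fun j => Fin.cases x₀ (fun i => x₀ + (ρ/2) • e i) j with hw₀
  have hw₀P : w₀ ∈ P := by
    intro j _
    show w₀ j ∈ K.toSet
    induction j using Fin.cases with
    | zero =>
        simp only [hw₀, Fin.cases_zero]
        exact interior_subset hx₀
    | succ i =>
        simp only [hw₀, Fin.cases_succ]
        apply hballρK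
        rw [mem_ball_iff_norm]
        have heq : x₀ + (ρ/2) • e i - x₀ = (ρ/2) • e i := by abel
        rw [heq, norm_smul, hnorm_e i, Real.norm_eq_abs, abs_of_pos (by positivity), mul_one]
        linarith
  have hfw₀ : 0 < f w₀ := by
    have hBw : (fun j : Fin n => w₀ j.succ - w₀ 0) = fun j => (ρ/2) • e j := by
      funext j
      simp only [hw₀, Fin.cases_succ, Fin.cases_zero]
      abel
    show 0 < |e.det (fun j => w₀ j.succ - w₀ 0)|
    rw [hBw]
    have hdet : e.det (fun j => (ρ/2) • e j) = (ρ/2)^n := by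
      have h := e.det.toMultilinearMap.map_smul_univ (fun _ : Fin n => (ρ/2)) e
      simp only [AlternatingMap.coe_multilinearMap] at h
      rw [h, Module.Basis.det_self, Finset.prod_const, Finset.card_univ, Fintype.card_fin,
        smul_eq_mul, mul_one]
    rw [hdet, abs_pos]
    positivity
  have hfv : 0 < f v := lt_of_lt_of_le hfw₀ (hvmax hw₀P)
  set B : Fin n → EucSp n := fun j => v j.succ - v 0 with hB
  have hdetB : e.det B ≠ 0 := by
    intro h
    have hz : f v = 0 := by
      show |e.det (fun j => v j.succ - v 0)| = 0
      rw [show (fun j : Fin n => v j.succ - v 0) = B from rfl, h, abs_zero]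
    rw [hz] at hfv
    exact lt_irrefl 0 hfv
  have hbasis := (Module.Basis.is_basis_iff_det e).mpr (isUnit_iff_ne_zero.mpr hdetB)
  set B' : Module.Basis (Fin n) ℝ (EucSp n) := Module.Basis.mk hbasis.1 hbasis.2.ge with hB'
  have hB'eq : ∀ j, B' j = B j := fun j => by rw [hB', Module.Basis.coe_mk]
  -- coordinate bound from maximality
  have hcoord : ∀ x ∈ K.toSet, ∀ i : Fin n, |B'.equivFun (x - v 0) i| ≤ 1 := by
    intro x hx i
    set c : Fin n → ℝ := B'.equivFun (x - v 0) with hc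
    have hupdP : Function.update v i.succ x ∈ P := by
      intro j _
      show Function.update v i.succ x j ∈ K.toSet
      rcases eq_or_ne j i.succ with rfl | hne
      · rw [Function.update_self]; exact hx
      · rw [Function.update_of_ne hne]; exact hvmem j
    have hfd : f (Function.update v i.succ x) ≤ f v := hvmax hupdP
    have hfam : (fun j : Fin n => Function.update v i.succ x j.succ
        - Function.update v i.succ x 0) = Function.update B i (x - v 0) := by
      funext j
      rw [Function.update_of_ne (Fin.succ_ne_zero i).symm]
      rcases eq_or_ne j i with rfl | hne
      · rw [Function.update_self, Function.update_self]
      · rw [Function.update_of_ne (fun h => hne (Fin.succ_injective n h)),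
          Function.update_of_ne hne]
    have hxc : x - v 0 = ∑ k, c k • B' k := (B'.sum_equivFun (x - v 0)).symm
    have hdet2 : e.det (Function.update B i (x - v 0)) = c i * e.det B := by
      rw [hxc]
      have hsum := e.det.toMultilinearMap.map_update_sum Finset.univ i
        (fun k : Fin n => c k • B' k) B
      simp only [AlternatingMap.coe_multilinearMap] at hsum
      rw [hsum]
      have hterm : ∀ k : Fin n, e.det (Function.update B i (c k • B' k))
          = if k = i then c i * e.det B else 0 := by
        intro k
        rw [hB'eq k]
        have hsmul := e.det.toMultilinearMap.map_update_smul B i (c k) (B k)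
        simp only [AlternatingMap.coe_multilinearMap] at hsmul
        rw [hsmul]
        rcases eq_or_ne k i with rfl | hkne
        · rw [if_pos rfl, Function.update_eq_self, smul_eq_mul]
        · rw [if_neg hkne]
          have hzero : e.det (Function.update B i (B k)) = 0 := by
            apply AlternatingMap.map_eq_zero_of_eq _ _
              (show Function.update B i (B k) i = Function.update B i (B k) k from ?_)
              (Ne.symm hkne)
            rw [Function.update_self, Function.update_of_ne hkne]
          rw [hzero, smul_zero]
      rw [Finset.sum_congr rfl (fun k _ => hterm k)]
      rw [Finset.sum_ite_eq' Finset.univ i (fun _ => c i * e.det B)]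
      rw [if_pos (Finset.mem_univ i)]
    have habs : |c i| * |e.det B| ≤ |e.det B| := by
      have h1 : f (Function.update v i.succ x) = |c i| * |e.det B| := by
        show |e.det (fun j : Fin n => Function.update v i.succ x j.succ
          - Function.update v i.succ x 0)| = |c i| * |e.det B|
        rw [hfam, hdet2, abs_mul]
      have h2 : f v = |e.det B| := rfl
      rw [h1, h2] at hfd
      exact hfd
    have hpos : 0 < |e.det B| := abs_pos.mpr hdetB
    exact le_of_mul_le_mul_right (by rwa [one_mul]) hpos
  -- the affine map
  set W : EucSp n ≃ₗ[ℝ] (Fin n → ℝ) := WithLp.linearEquiv 2 ℝ (Fin n → ℝ) with hW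
  set Λ : EucSp n ≃ₗ[ℝ] EucSp n := B'.equivFun.trans W.symm with hΛ
  have hΛcoord : ∀ (y : EucSp n) (i : Fin n), (Λ y) i = B'.equivFun y i :=
    fun y i => rfl
  set z : EucSp n := W.symm (fun _ => 1 / (2 * (n : ℝ))) with hz
  have hzcoord : ∀ i : Fin n, z i = 1 / (2 * (n : ℝ)) := fun i => rfl
  set T : EucSp n ≃ᵃ[ℝ] EucSp n :=
    ((AffineEquiv.constVAdd ℝ (EucSp n) (-(v 0))).trans Λ.toAffineEquiv).trans
      (AffineEquiv.constVAdd ℝ (EucSp n) (-z)) with hT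
  have hTeval : ∀ x : EucSp n, T x = Λ (x - v 0) - z := by
    intro x
    rw [hT]
    simp only [AffineEquiv.trans_apply, AffineEquiv.constVAdd_apply,
      LinearEquiv.coe_toAffineEquiv, vadd_eq_add]
    rw [neg_add_eq_sub, neg_add_eq_sub]
  have happly : ∀ (a b : EucSp n) (i : Fin n), (a - b) i = a i - b i := fun a b i => rfl
  have hTcoordz : ∀ x ∈ K.toSet, ∀ i : Fin n, |(T x) i + z i| ≤ 1 := by
    intro x hx i
    rw [hTeval, happly, sub_add_cancel, hΛcoord]
    exact hcoord x hx i
  have hTKconv : Convex ℝ (⇑T '' K.toSet) := (affImage T K).1.convex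
  refine ⟨T, ?_, ?_⟩
  · -- lower inclusion
    intro u hu
    rw [mem_closedBall, dist_eq_norm, sub_zero] at hu
    set wvec : EucSp n := u + z with hwvec
    have hwcoord : ∀ i : Fin n, wvec i = u i + z i := fun i => rfl
    -- coordinates of wvec are nonnegative and sum to at most one
    have hcoords1 : ∀ i : Fin n, 0 ≤ wvec i := by
      intro i
      have hn1 : (1:ℝ) ≤ (n:ℝ) := by exact_mod_cast Nat.one_le_iff_ne_zero.mpr i.pos.ne'
      have h1 : |u i| ≤ rLow n := le_trans (euclid_abs_coord_le_norm u i) hu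
      have h2 : rLow n ≤ 1 / (2 * (n:ℝ)) := by
        unfold rLow
        apply one_div_le_one_div_of_le (by linarith)
        nlinarith [Real.sqrt_nonneg (n:ℝ)]
      rw [hwcoord, hzcoord]
      have h3 := abs_le.mp h1
      linarith [h3.1]
    have hzsum : ∑ i : Fin n, z i = (n : ℝ) * (1 / (2 * (n:ℝ))) := by
      rw [Finset.sum_congr rfl (fun i _ => hzcoord i), Finset.sum_const,
        Finset.card_univ, Fintype.card_fin, nsmul_eq_mul]
    have husum : ∑ i : Fin n, u i ≤ (n:ℝ) * rLow n := by
      calc ∑ i : Fin n, u i ≤ ∑ i : Fin n, |u i| :=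
            Finset.sum_le_sum (fun i _ => le_abs_self _)
        _ ≤ ∑ _i : Fin n, rLow n :=
            Finset.sum_le_sum (fun i _ => le_trans (euclid_abs_coord_le_norm u i) hu)
        _ = (n:ℝ) * rLow n := by
            rw [Finset.sum_const, Finset.card_univ, Fintype.card_fin, nsmul_eq_mul]
    have hzhalf : (n:ℝ) * (1 / (2 * (n:ℝ))) ≤ 1/2 := by
      rcases Nat.eq_zero_or_pos n with h | h
      · subst h
        norm_num
      · have hn : (0:ℝ) < (n:ℝ) := by exact_mod_cast h
        rw [mul_one_div, div_le_div_iff₀ (by linarith) two_pos]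
        linarith
    have hrsum : (n:ℝ) * rLow n ≤ 1/2 := by
      unfold rLow
      have hs := Real.sqrt_nonneg (n:ℝ)
      have hn : (0:ℝ) ≤ (n:ℝ) := Nat.cast_nonneg n
      rw [mul_one_div, div_le_iff₀ (by positivity)]
      nlinarith
    have hsum : ∑ i : Fin n, wvec i ≤ 1 := by
      have h1 : ∑ i : Fin n, wvec i = (∑ i : Fin n, u i) + ∑ i : Fin n, z i := by
        rw [← Finset.sum_add_distrib]
        exact Finset.sum_congr rfl (fun i _ => hwcoord i)
      rw [h1, hzsum]
      linarith
    -- convex combination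
    set ω : Fin (n+1) → ℝ := fun j => Fin.cases (1 - ∑ i : Fin n, wvec i)
      (fun i => wvec i) j with hω
    set g : Fin (n+1) → EucSp n := fun j => Fin.cases (T (v 0))
      (fun i => T (v i.succ)) j with hg
    have hω0 : ∀ j, 0 ≤ ω j := by
      intro j
      induction j using Fin.cases with
      | zero =>
          simp only [hω, Fin.cases_zero]
          linarith
      | succ i =>
          simp only [hω, Fin.cases_succ]
          exact hcoords1 i
    have hωsum : ∑ j, ω j = 1 := by
      rw [Fin.sum_univ_succ]
      simp only [hω, Fin.cases_zero, Fin.cases_succ]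
      ring
    have hgmem : ∀ j, g j ∈ ⇑T '' K.toSet := by
      intro j
      induction j using Fin.cases with
      | zero =>
          simp only [hg, Fin.cases_zero]
          exact Set.mem_image_of_mem _ (hvmem 0)
      | succ i =>
          simp only [hg, Fin.cases_succ]
          exact Set.mem_image_of_mem _ (hvmem i.succ)
    have hkey : ∑ i : Fin n, wvec i • Λ (B i) = wvec := by
      have h0 : Λ (B'.equivFun.symm (W wvec)) = wvec := by
        rw [hΛ]
        simp only [LinearEquiv.trans_apply, LinearEquiv.apply_symm_apply]
        exact W.symm_apply_apply wvec
      have h1 : B'.equivFun.symm (W wvec) = ∑ i : Fin n, wvec i • B' i := by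
        rw [Module.Basis.equivFun_symm_apply]
        exact Finset.sum_congr rfl (fun i _ => rfl)
      rw [h1, map_sum] at h0
      simp only [_root_.map_smul] at h0
      calc ∑ i : Fin n, wvec i • Λ (B i) = ∑ i : Fin n, wvec i • Λ (B' i) := by
            apply Finset.sum_congr rfl
            intro i _
            rw [hB'eq]
        _ = wvec := h0
    have hTv0 : T (v 0) = -z := by
      rw [hTeval, sub_self, map_zero, zero_sub]
    have hTvi : ∀ i : Fin n, T (v i.succ) = Λ (B i) - z := fun i => hTeval (v i.succ)
    have hcomb : ∑ j : Fin (n+1), ω j • g j = u := by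
      rw [Fin.sum_univ_succ]
      simp only [hω, hg, Fin.cases_zero, Fin.cases_succ]
      rw [hTv0]
      have hstep : ∑ i : Fin n, wvec i • T (v i.succ)
          = wvec - (∑ i : Fin n, wvec i) • z := by
        calc ∑ i : Fin n, wvec i • T (v i.succ)
            = ∑ i : Fin n, (wvec i • Λ (B i) - wvec i • z) := by
              apply Finset.sum_congr rfl
              intro i _
              rw [hTvi, smul_sub]
          _ = (∑ i : Fin n, wvec i • Λ (B i)) - ∑ i : Fin n, wvec i • z :=
              Finset.sum_sub_distrib _ _
          _ = wvec - (∑ i : Fin n, wvec i) • z := by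
              rw [hkey, Finset.sum_smul]
      rw [hstep, hwvec]
      rw [smul_neg, sub_smul, one_smul]
      abel
    have hmem := Convex.sum_mem (t := Finset.univ) hTKconv
      (fun j _ => hω0 j) hωsum (fun j _ => hgmem j)
    rw [hcomb] at hmem
    exact hmem
  · -- upper inclusion
    rintro y ⟨x, hx, rfl⟩
    rw [mem_closedBall, dist_eq_norm, sub_zero]
    have hbnd : ∀ i : Fin n, |(T x) i| ≤ 1 + 1/(2*(n:ℝ)) := by
      intro i
      have h1 := hTcoordz x hx i
      have h2 : |z i| ≤ 1/(2*(n:ℝ)) := by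
        rw [hzcoord]
        rw [abs_of_nonneg (by positivity)]
      have h3 : (T x) i = ((T x) i + z i) + (-(z i)) := by ring
      rw [h3]
      refine le_trans (abs_add_le _ _) ?_
      rw [abs_neg]
      exact add_le_add h1 h2
    have hnorm := euclid_norm_le_of_coords (by positivity) hbnd
    refine le_trans hnorm ?_
    unfold rHigh
    rcases Nat.eq_zero_or_pos n with h | h
    · subst h
      norm_num [Real.sqrt_zero]
    · have hn1 : (1:ℝ) ≤ (n:ℝ) := by exact_mod_cast h
      have hs1 : (1:ℝ) ≤ Real.sqrt n := by
        rw [show (1:ℝ) = Real.sqrt 1 from (Real.sqrt_one).symm]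
        exact Real.sqrt_le_sqrt hn1
      have h2n : 1/(2*(n:ℝ)) ≤ 1 := by
        rw [div_le_one (by linarith)]
        linarith
      nlinarith [Real.sqrt_nonneg (n:ℝ)]

end AuxStmt3


open Metric in
/-- For affine invariant points `p, q` with `p` proper, the map
`φ_q(K) = inf {t ≥ 0 : q(K) − p(K) ∈ t(K − p(K))}` is continuous; there is `c > 0` with
`q(K) − p(K) ∈ c(K − p(K))` for all `K`; and if `q` is proper, `c` may be chosen in `(0,1)`. -/
theorem statement3 (n : ℕ) (p q : Kn n → EucSp n)
    (hp : IsAffineInvariantPoint p) (hq : IsAffineInvariantPoint q)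
    (hproper : ∀ K : Kn n, p K ∈ interior K.toSet) :
    Continuous (fun K : Kn n =>
        sInf {t : ℝ | 0 ≤ t ∧ q K - p K ∈ t • ((fun x => x - p K) '' K.toSet)}) ∧
    (∃ c : ℝ, 0 < c ∧ ∀ K : Kn n,
        q K - p K ∈ c • ((fun x => x - p K) '' K.toSet)) ∧
    ((∀ K : Kn n, q K ∈ interior K.toSet) →
      ∃ c : ℝ, 0 < c ∧ c < 1 ∧ ∀ K : Kn n,
        q K - p K ∈ c • ((fun x => x - p K) '' K.toSet)) := by
  have hfun : (fun K : Kn n =>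
      sInf {t : ℝ | 0 ≤ t ∧ q K - p K ∈ t • ((fun x => x - p K) '' K.toSet)})
      = fun K : Kn n => gauge (KS p K) (q K - p K) := by
    funext K
    exact sInf_eq_gauge (KS_nonempty p K) _
  have hnhds : ∀ K : Kn n, KS p K ∈ nhds (0 : EucSp n) := by
    intro K
    obtain ⟨r', hr', hb⟩ := Metric.isOpen_iff.mp isOpen_interior (p K) (hproper K)
    have hcb : closedBall (p K) (r'/2) ⊆ K.toSet :=
      subset_trans (closedBall_subset_ball (by linarith)) (hb.trans interior_subset)
    exact Filter.mem_of_superset (Metric.closedBall_mem_nhds 0 (by positivity))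
      (ball_subset_KS hcb)
  have hcont : Continuous (fun K : Kn n => gauge (KS p K) (q K - p K)) :=
    phi_continuous hp hq hproper
  set D : Set (Kn n) := {K : Kn n | closedBall (0 : EucSp n) (rLow n) ⊆ K.toSet ∧
      K.toSet ⊆ closedBall (0 : EucSp n) (rHigh n)} with hD
  have hDcomp : IsCompact D := isCompact_Dset _ _ (rLow_pos n)
  have hDne : D.Nonempty := by
    refine ⟨⟨⟨closedBall (0 : EucSp n) (rHigh n), convex_closedBall _ _,
      isCompact_closedBall _ _, ⟨0, mem_closedBall_self (rHigh_pos n).le⟩⟩,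
      ⟨0, mem_interior.mpr ⟨ball 0 (rHigh n), ball_subset_closedBall, isOpen_ball,
        mem_ball_self (rHigh_pos n)⟩⟩⟩, ?_, ?_⟩
    · exact closedBall_subset_closedBall (rLow_le_rHigh n)
    · exact subset_rfl
  obtain ⟨K₁, hK₁D, hK₁max⟩ := hDcomp.exists_isMaxOn hDne hcont.continuousOn
  set m : ℝ := gauge (KS p K₁) (q K₁ - p K₁) with hm
  have hm0 : 0 ≤ m := gauge_nonneg _
  have hbound : ∀ K : Kn n, gauge (KS p K) (q K - p K) ≤ m := by
    intro K
    obtain ⟨T, hT1, hT2⟩ := exists_normalized K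
    have hmem : affImage T K ∈ D := ⟨hT1, hT2⟩
    have h := hK₁max hmem
    rw [← phi_affImage hp hq T K]
    exact h
  refine ⟨?_, ?_, ?_⟩
  · rw [hfun]
    exact hcont
  · refine ⟨m + 1, by linarith, ?_⟩
    intro K
    show q K - p K ∈ (m + 1) • KS p K
    apply mem_smul_of_gauge_le (KS_convex p K) (hnhds K) (KS_isClosed p K) (by linarith)
    linarith [hbound K]
  · intro hqproper
    have hlt1 : m < 1 := interior_subset_gauge_lt_one (KS p K₁)
      (mem_interior_KS (p := p) (hqproper K₁))
    refine ⟨max m (1/2), lt_of_lt_of_le (by norm_num) (le_max_right _ _),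
      max_lt hlt1 (by norm_num), ?_⟩
    intro K
    show q K - p K ∈ (max m (1/2)) • KS p K
    apply mem_smul_of_gauge_le (KS_convex p K) (hnhds K) (KS_isClosed p K)
      (lt_of_lt_of_le (by norm_num) (le_max_right _ _))
    exact le_trans (hbound K) (le_max_left _ _)
end

section
/- Let K ∈ 𝒦ₙ. Then for every point x in the relative interior of K ∩ 𝔓ₙ(K) (relative to the affine subspace 𝔓ₙ(K)) there is a proper affine invariant point q with q(K) = x. -/
open scoped Pointwise
open MeasureTheory

noncomputable section Aux

variable {n : ℕ}

namespace Stmt17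

lemma kn_toSet_affImage (T : EucSp n ≃ᵃ[ℝ] EucSp n) (L : Kn n) :
    (affImage T L).toSet = (T : EucSp n → EucSp n) '' L.toSet := rfl

lemma kn_convex (L : Kn n) : Convex ℝ L.toSet := L.1.convex
lemma kn_isCompact (L : Kn n) : IsCompact L.toSet := L.1.isCompact
lemma kn_isClosed (L : Kn n) : IsClosed L.toSet := L.1.isCompact.isClosed
lemma kn_nonempty (L : Kn n) : L.toSet.Nonempty := L.1.nonempty
lemma kn_interior_nonempty (L : Kn n) : (interior L.toSet).Nonempty := L.2

lemma kn_dist (L M : Kn n) : dist L M = Metric.hausdorffDist L.toSet M.toSet := rfl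

lemma kn_edist_ne_top (L M : Kn n) :
    EMetric.hausdorffEdist L.toSet M.toSet ≠ ⊤ :=
  ConvexBody.hausdorffEdist_ne_top

/-- If `closedBall x r ⊆ s`, everything in `s` is `ε`-close to the closed convex set `t`,
and `ε ≤ r`, then `x ∈ t`. -/
lemma mem_of_near {s t : Set (EucSp n)} (ht : Convex ℝ t) (htc : IsClosed t)
    (htne : t.Nonempty) {x : EucSp n} {r ε : ℝ} (hε0 : 0 < ε)
    (hball : Metric.closedBall x r ⊆ s) (hε : ε ≤ r)
    (h : ∀ w ∈ s, ∃ y ∈ t, dist w y < ε) : x ∈ t := by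
  by_contra hx
  obtain ⟨f, u, hfu, hux⟩ := geometric_hahn_banach_closed_point ht htc hx
  set v := (InnerProductSpace.toDual ℝ (EucSp n)).symm f with hv
  have hfv : ∀ z, f z = inner ℝ v z := by
    intro z
    have : InnerProductSpace.toDual ℝ (EucSp n) v = f :=
      (InnerProductSpace.toDual ℝ (EucSp n)).apply_symm_apply f
    rw [← this, InnerProductSpace.toDual_apply_apply]
  obtain ⟨a, ha⟩ := htne
  have hvne : v ≠ 0 := by
    intro h0
    have h1 : f a < u := hfu a ha
    have h2 : u < f x := hux
    rw [hfv a, h0, inner_zero_left] at h1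
    rw [hfv x, h0, inner_zero_left] at h2
    linarith
  have hvpos : 0 < ‖v‖ := norm_pos_iff.2 hvne
  set w := x + r • (‖v‖⁻¹ • v) with hw
  have hwball : w ∈ Metric.closedBall x r := by
    rw [Metric.mem_closedBall, dist_eq_norm, hw]
    have h9 : x + r • ‖v‖⁻¹ • v - x = r • ‖v‖⁻¹ • v := by abel
    rw [h9, norm_smul, norm_smul, norm_inv, norm_norm, Real.norm_eq_abs,
      abs_of_pos (lt_of_lt_of_le hε0 hε), inv_mul_cancel₀ hvpos.ne', mul_one]
  obtain ⟨y, hyt, hdy⟩ := h w (hball hwball)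
  have hfw : f w = f x + r * ‖v‖ := by
    rw [hfv, hfv, hw, inner_add_right, real_inner_smul_right, real_inner_smul_right,
      real_inner_self_eq_norm_sq]
    field_simp
  have h4 : f w - f y ≤ ‖v‖ * ‖w - y‖ := by
    rw [hfv, hfv, ← inner_sub_right]
    exact real_inner_le_norm v (w - y)
  have h5 : ‖w - y‖ < ε := by rw [← dist_eq_norm]; exact hdy
  have h1 : f y < u := hfu y hyt
  nlinarith [mul_lt_mul_of_pos_left h5 hvpos]

lemma vol_pos (L : Kn n) : 0 < (volume L.toSet).toReal := by
  have h1 : 0 < volume (interior L.toSet) := isOpen_interior.measure_pos volume L.2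
  have h2 : 0 < volume L.toSet := lt_of_lt_of_le h1 (measure_mono interior_subset)
  exact ENNReal.toReal_pos h2.ne' (kn_isCompact L).measure_lt_top.ne

lemma vol_ne_zero (L : Kn n) : (volume L.toSet).toReal ≠ 0 := (vol_pos L).ne'

lemma integrableOn_cont (L : Kn n) {F : Type*} [NormedAddCommGroup F]
    (f : EucSp n → F) (hf : Continuous f) : IntegrableOn f L.toSet volume :=
  hf.continuousOn.integrableOn_compact (kn_isCompact L)

lemma eventually_subset_closedBall (K₀ : Kn n) {R : ℝ}
    (hR : K₀.toSet ⊆ Metric.closedBall 0 R) :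
    ∀ᶠ L : Kn n in nhds K₀, L.toSet ⊆ Metric.closedBall 0 (R + 1) := by
  have hball : ∀ᶠ L : Kn n in nhds K₀, dist L K₀ < 1 := by
    have := Metric.ball_mem_nhds K₀ one_pos
    filter_upwards [this] with L hL using Metric.mem_ball.1 hL
  filter_upwards [hball] with L hL y hy
  have hd : Metric.hausdorffDist L.toSet K₀.toSet < 1 := by rwa [← kn_dist]
  obtain ⟨z, hz, hdz⟩ := Metric.exists_dist_lt_of_hausdorffDist_lt hy hd (kn_edist_ne_top L K₀)
  have : dist y (0 : EucSp n) ≤ dist y z + dist z 0 := dist_triangle _ _ _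
  have hz' : dist z (0 : EucSp n) ≤ R := hR hz
  rw [Metric.mem_closedBall]
  linarith

lemma eventually_mem_of_mem_interior (K₀ : Kn n) {y : EucSp n}
    (hy : y ∈ interior K₀.toSet) : ∀ᶠ L : Kn n in nhds K₀, y ∈ L.toSet := by
  obtain ⟨r', hr', hsub⟩ := Metric.mem_nhds_iff.1 (mem_interior_iff_mem_nhds.1 hy)
  set r := r' / 2 with hrdef
  have hr : 0 < r := by positivity
  have hcb : Metric.closedBall y r ⊆ K₀.toSet :=
    (Metric.closedBall_subset_ball (by linarith)).trans hsub
  have hball : ∀ᶠ L : Kn n in nhds K₀, dist K₀ L < r := by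
    have := Metric.ball_mem_nhds K₀ hr
    filter_upwards [this] with L hL
    rw [dist_comm]; exact Metric.mem_ball.1 hL
  filter_upwards [hball] with L hL
  refine mem_of_near (kn_convex L) (kn_isClosed L) (kn_nonempty L) hr hcb le_rfl ?_
  intro w hw
  have hd : Metric.hausdorffDist K₀.toSet L.toSet < r := by rwa [← kn_dist]
  exact Metric.exists_dist_lt_of_hausdorffDist_lt hw hd (kn_edist_ne_top K₀ L)

lemma eventually_not_mem_of_not_mem (K₀ : Kn n) {y : EucSp n}
    (hy : y ∉ K₀.toSet) : ∀ᶠ L : Kn n in nhds K₀, y ∉ L.toSet := by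
  obtain ⟨r, hr, hsub⟩ := Metric.isOpen_iff.1 (kn_isClosed K₀).isOpen_compl y hy
  have hball : ∀ᶠ L : Kn n in nhds K₀, dist L K₀ < r := by
    have := Metric.ball_mem_nhds K₀ hr
    filter_upwards [this] with L hL using Metric.mem_ball.1 hL
  filter_upwards [hball] with L hL hmem
  have hd : Metric.hausdorffDist L.toSet K₀.toSet < r := by rwa [← kn_dist]
  obtain ⟨z, hz, hdz⟩ := Metric.exists_dist_lt_of_hausdorffDist_lt hmem hd (kn_edist_ne_top L K₀)
  exact (hsub (Metric.mem_ball'.2 hdz)) hz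

lemma tendsto_setIntegral (K₀ : Kn n) {F : Type*} [NormedAddCommGroup F]
    [NormedSpace ℝ F] (f : EucSp n → F) (hf : Continuous f) :
    Filter.Tendsto (fun L : Kn n => ∫ y in L.toSet, f y) (nhds K₀)
      (nhds (∫ y in K₀.toSet, f y)) := by
  obtain ⟨R, hR⟩ := (kn_isCompact K₀).isBounded.subset_closedBall 0
  have hRsub : K₀.toSet ⊆ Metric.closedBall 0 (max R 0) :=
    hR.trans (Metric.closedBall_subset_closedBall (le_max_left _ _))
  set R' := max R 0 + 1 with hR'
  obtain ⟨C, hC⟩ := (isCompact_closedBall (0 : EucSp n) R').exists_bound_of_continuousOn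
    hf.continuousOn
  set C' := max C 0 with hC'
  have hC0 : 0 ≤ C' := le_max_right _ _
  have hCb : ∀ y ∈ Metric.closedBall (0 : EucSp n) R', ‖f y‖ ≤ C' :=
    fun y hy => (hC y hy).trans (le_max_left _ _)
  set bound := (Metric.closedBall (0 : EucSp n) R').indicator (fun _ => C') with hbd
  have hrw : ∀ L : Kn n, ∫ y in L.toSet, f y = ∫ y, L.toSet.indicator f y :=
    fun L => (integral_indicator (kn_isCompact L).measurableSet).symm
  simp only [hrw]
  refine tendsto_integral_filter_of_dominated_convergence bound ?_ ?_ ?_ ?_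
  · exact Filter.Eventually.of_forall fun L =>
      (hf.aestronglyMeasurable).indicator (kn_isCompact L).measurableSet
  · filter_upwards [eventually_subset_closedBall K₀ hRsub] with L hL
    refine Filter.Eventually.of_forall fun y => ?_
    by_cases hy : y ∈ L.toSet
    · rw [Set.indicator_of_mem hy, hbd, Set.indicator_of_mem (hL hy)]
      exact hCb y (hL hy)
    · rw [Set.indicator_of_notMem hy, norm_zero]
      exact Set.indicator_nonneg (fun _ _ => hC0) y
  · rw [hbd, integrable_indicator_iff Metric.isClosed_closedBall.measurableSet]
    exact integrableOn_const measure_closedBall_lt_top.ne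
  · have hfr : volume (frontier K₀.toSet) = 0 :=
      Convex.addHaar_frontier volume (kn_convex K₀)
    filter_upwards [measure_eq_zero_iff_ae_notMem.1 hfr] with y hy
    by_cases hyi : y ∈ interior K₀.toSet
    · have hev : ∀ᶠ L : Kn n in nhds K₀, L.toSet.indicator f y = f y := by
        filter_upwards [eventually_mem_of_mem_interior K₀ hyi] with L hL
        exact Set.indicator_of_mem hL f
      rw [Set.indicator_of_mem (interior_subset hyi) f]
      exact Filter.Tendsto.congr' (Filter.EventuallyEq.symm hev) tendsto_const_nhds
    · have hyK : y ∉ K₀.toSet := by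
        intro hyK
        exact hy ⟨subset_closure hyK, hyi⟩
      have hev : ∀ᶠ L : Kn n in nhds K₀, L.toSet.indicator f y = 0 := by
        filter_upwards [eventually_not_mem_of_not_mem K₀ hyK] with L hL
        exact Set.indicator_of_notMem hL f
      rw [Set.indicator_of_notMem hyK f]
      exact Filter.Tendsto.congr' (Filter.EventuallyEq.symm hev) tendsto_const_nhds

lemma tendsto_vol (K₀ : Kn n) :
    Filter.Tendsto (fun L : Kn n => (volume L.toSet).toReal) (nhds K₀)
      (nhds ((volume K₀.toSet).toReal)) := by
  have h : ∀ L : Kn n, (volume L.toSet).toReal = ∫ _ in L.toSet, (1 : ℝ) := by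
    intro L
    rw [setIntegral_const, smul_eq_mul, mul_one]
    rfl
  simp only [h]
  exact tendsto_setIntegral K₀ _ continuous_const

lemma continuous_centroid : Continuous (fun L : Kn n => centroid L.toSet) := by
  rw [continuous_iff_continuousAt]
  intro K₀
  unfold ContinuousAt
  show Filter.Tendsto (fun L : Kn n => (volume L.toSet).toReal⁻¹ • ∫ y in L.toSet, y)
    (nhds K₀) (nhds ((volume K₀.toSet).toReal⁻¹ • ∫ y in K₀.toSet, y))
  exact Filter.Tendsto.smul ((tendsto_vol K₀).inv₀ (vol_ne_zero K₀))
    (tendsto_setIntegral K₀ _ continuous_id)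

lemma centroid_mem_interior (L : Kn n) : centroid L.toSet ∈ interior L.toSet := by
  set g := centroid L.toSet with hg
  by_contra hgi
  obtain ⟨f, hf⟩ := geometric_hahn_banach_open_point ((kn_convex L).interior) isOpen_interior hgi
  -- hf : ∀ a ∈ interior L.toSet, f a < f g
  obtain ⟨z, hz⟩ := L.2
  have hK : ∀ a ∈ L.toSet, f a ≤ f g := by
    intro a ha
    have hseg : ∀ t : ℝ, 0 < t → t < 1 → t * f z + (1 - t) * f a < f g := by
      intro t ht0 ht1
      have hmem : t • z + (1 - t) • a ∈ interior L.toSet :=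
        (kn_convex L).combo_interior_closure_mem_interior hz (subset_closure ha) ht0
          (by linarith) (by ring)
      have := hf _ hmem
      simpa [map_add, _root_.map_smul, smul_eq_mul] using this
    have htend : Filter.Tendsto (fun t : ℝ => t * f z + (1 - t) * f a)
        (nhdsWithin 0 (Set.Ioi 0)) (nhds (f a)) := by
      have hc : Continuous (fun t : ℝ => t * f z + (1 - t) * f a) := by continuity
      have := (hc.tendsto 0).mono_left (nhdsWithin_le_nhds (s := Set.Ioi (0:ℝ)))
      simpa using this
    refine le_of_tendsto htend ?_
    have h1lt : ∀ᶠ t : ℝ in nhds 0, t < 1 := eventually_lt_nhds one_pos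
    filter_upwards [self_mem_nhdsWithin,
      eventually_nhdsWithin_of_eventually_nhds h1lt] with t ht0 ht1
    exact (hseg t ht0 ht1).le
  -- integral argument
  have hif : IntegrableOn (fun y => f y) L.toSet volume :=
    integrableOn_cont L _ f.continuous
  have hid : IntegrableOn (fun y : EucSp n => y) L.toSet volume :=
    integrableOn_cont L _ continuous_id
  have hconst : IntegrableOn (fun _ : EucSp n => f g) L.toSet volume :=
    integrableOn_const (kn_isCompact L).measure_lt_top.ne
  have hfint : ∫ y in L.toSet, f y = f (∫ y in L.toSet, y) :=
    f.integral_comp_comm hid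
  have hfg : f g = (volume L.toSet).toReal⁻¹ * f (∫ y in L.toSet, y) := by
    rw [hg]
    show f ((volume L.toSet).toReal⁻¹ • ∫ y in L.toSet, y) = _
    simp [smul_eq_mul]
  have hzero : ∫ y in L.toSet, (f g - f y) = 0 := by
    have hv := vol_ne_zero L
    rw [integral_sub hconst hif, setIntegral_const, hfint, smul_eq_mul, hfg]
    field_simp
    simp [Measure.real]
  have hae : (fun y => f g - f y) =ᶠ[ae (volume.restrict L.toSet)] 0 := by
    refine (setIntegral_eq_zero_iff_of_nonneg_ae ?_ (hconst.sub hif)).1 hzero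
    rw [Filter.EventuallyLE, ae_restrict_iff' (kn_isCompact L).measurableSet]
    refine Filter.Eventually.of_forall fun y hy => ?_
    have := hK y hy
    simp only [Pi.zero_apply, Pi.sub_apply, sub_nonneg]
    exact this
  have hnull : volume.restrict L.toSet {y | f g - f y ≠ 0} = 0 := by
    rw [Filter.EventuallyEq, ae_iff] at hae
    simpa using hae
  have hsub : interior L.toSet ⊆ {y | f g - f y ≠ 0} := by
    intro y hy
    have := hf y hy
    simp only [Set.mem_setOf_eq, ne_eq, sub_eq_zero]
    exact fun hcontra => (ne_of_lt this) hcontra.symm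
  have hzero2 : volume (interior L.toSet) = 0 := by
    have h1 : volume.restrict L.toSet (interior L.toSet) = 0 :=
      measure_mono_null hsub hnull
    rwa [Measure.restrict_apply' (kn_isCompact L).measurableSet,
      Set.inter_eq_self_of_subset_left interior_subset] at h1
  exact absurd hzero2 (isOpen_interior.measure_pos volume L.2).ne'

lemma centroid_affImage (T : EucSp n ≃ᵃ[ℝ] EucSp n) (L : Kn n) :
    centroid (affImage T L).toSet = T (centroid L.toSet) := by
  classical
  set A := T.linear with hA
  set A' := LinearMap.toContinuousLinearMap (A : EucSp n →ₗ[ℝ] EucSp n) with hA'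
  have hT : ∀ y, T y = A' y + T 0 := by
    intro y
    have := T.map_vadd 0 y
    simp [vadd_eq_add] at this; exact this
  have hdet : A'.det = LinearMap.det (A : EucSp n →ₗ[ℝ] EucSp n) := by
    simp [ContinuousLinearMap.det, hA', LinearMap.coe_toContinuousLinearMap]
  have hdet0 : LinearMap.det (A : EucSp n →ₗ[ℝ] EucSp n) ≠ 0 := A.isUnit_det'.ne_zero
  have hK : (affImage T L).toSet = (T : EucSp n → EucSp n) '' L.toSet := rfl
  have hmeas := (kn_isCompact L).measurableSet
  have hder : ∀ y ∈ L.toSet, HasFDerivWithinAt (T : EucSp n → EucSp n) A' L.toSet y := by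
    intro y _
    have h1 : HasFDerivAt (fun y => A' y + T 0) A' y := A'.hasFDerivAt.add_const _
    have h2 : (fun y : EucSp n => A' y + T 0) = (T : EucSp n → EucSp n) :=
      funext fun y => (hT y).symm
    rw [h2] at h1
    exact h1.hasFDerivWithinAt
  have hchg : ∫ y in (T : EucSp n → EucSp n) '' L.toSet, y =
      ∫ y in L.toSet, |A'.det| • (T y) := by
    exact integral_image_eq_integral_abs_det_fderiv_smul volume hmeas hder
      (T.injective.injOn) _
  have hid : IntegrableOn (fun y : EucSp n => y) L.toSet volume :=
    integrableOn_cont L _ continuous_id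
  have hiA : IntegrableOn (fun y : EucSp n => A' y) L.toSet volume :=
    integrableOn_cont L _ A'.continuous
  have hiconst : IntegrableOn (fun _ : EucSp n => T 0) L.toSet volume :=
    integrableOn_const (kn_isCompact L).measure_lt_top.ne
  have hTint : ∫ y in L.toSet, (T y : EucSp n) =
      A' (∫ y in L.toSet, y) + (volume L.toSet).toReal • T 0 := by
    have h3 : ∀ y : EucSp n, (T y : EucSp n) = A' y + T 0 := hT
    rw [show (fun y : EucSp n => (T y : EucSp n)) = fun y => A' y + T 0 from funext h3]
    rw [integral_add hiA hiconst, A'.integral_comp_comm hid, setIntegral_const]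
    rfl
  have hvol : volume ((T : EucSp n → EucSp n) '' L.toSet) =
      ENNReal.ofReal |LinearMap.det (A : EucSp n →ₗ[ℝ] EucSp n)| * volume L.toSet := by
    have himg : (T : EucSp n → EucSp n) '' L.toSet =
        (fun z => z + (-(T 0))) ⁻¹' ((A : EucSp n →ₗ[ℝ] EucSp n) '' L.toSet) := by
      ext z
      simp only [Set.mem_image, Set.mem_preimage]
      constructor
      · rintro ⟨y, hy, rfl⟩
        refine ⟨y, hy, ?_⟩
        rw [hT y]
        have hAy : (A : EucSp n →ₗ[ℝ] EucSp n) y = A' y := by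
          simp [hA', LinearMap.coe_toContinuousLinearMap]
        rw [hAy]; abel
      · rintro ⟨y, hy, hyz⟩
        refine ⟨y, hy, ?_⟩
        rw [hT y]
        have : (A : EucSp n →ₗ[ℝ] EucSp n) y = z + -T 0 := hyz
        rw [show (A' y : EucSp n) = (A : EucSp n →ₗ[ℝ] EucSp n) y from by
          simp [hA', LinearMap.coe_toContinuousLinearMap], this]
        abel
    rw [himg, measure_preimage_add_right, Measure.addHaar_image_linearMap]
  -- now assemble
  show (volume ((affImage T L).toSet)).toReal⁻¹ •
      (∫ y in (affImage T L).toSet, y) = T (centroid L.toSet)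
  rw [hK, hchg, hvol, integral_smul, hTint]
  set d := LinearMap.det (A : EucSp n →ₗ[ℝ] EucSp n)
  set I := ∫ y in L.toSet, (y : EucSp n)
  set v := (volume L.toSet).toReal with hvdef
  have hvne : v ≠ 0 := vol_ne_zero L
  have htoReal : (ENNReal.ofReal |d| * volume L.toSet).toReal = |d| * v := by
    rw [ENNReal.toReal_mul, ENNReal.toReal_ofReal (abs_nonneg d)]
  rw [hdet, htoReal]
  have habs : |d| ≠ 0 := abs_ne_zero.2 hdet0
  rw [smul_smul]
  have : (|d| * v)⁻¹ * |d| = v⁻¹ := by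
    field_simp
  rw [this]
  rw [smul_add, smul_smul, inv_mul_cancel₀ hvne, one_smul, ← _root_.map_smul A']
  rw [hT (centroid L.toSet)]
  rfl

lemma isAIP_centroid : IsAffineInvariantPoint (fun L : Kn n => centroid L.toSet) :=
  ⟨continuous_centroid, fun T L => centroid_affImage T L⟩

/-- The body translated so that its centroid sits at the origin. -/
def shifted (L : Kn n) : Set (EucSp n) := (fun z => z + centroid L.toSet) ⁻¹' L.toSet

lemma shifted_mem_iff (L : Kn n) {z : EucSp n} :
    z ∈ shifted L ↔ z + centroid L.toSet ∈ L.toSet := Iff.rfl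

lemma shifted_convex (L : Kn n) : Convex ℝ (shifted L) := by
  have := (kn_convex L).translate_preimage_right (centroid L.toSet)
  have heq : (fun x => centroid L.toSet + x) ⁻¹' L.toSet = shifted L := by
    ext z; simp [shifted, add_comm]
  rwa [heq] at this

lemma shifted_mem_nhds_zero (L : Kn n) : shifted L ∈ nhds (0 : EucSp n) := by
  rw [← mem_interior_iff_mem_nhds]
  have h := centroid_mem_interior L
  have : shifted L = (Homeomorph.addRight (centroid L.toSet)) ⁻¹' L.toSet := rfl
  rw [this, ← Homeomorph.preimage_interior]
  simpa using h

lemma gauge_image_linear (A : EucSp n ≃ₗ[ℝ] EucSp n) (s : Set (EucSp n)) (x : EucSp n) :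
    gauge ((A : EucSp n → EucSp n) '' s) (A x) = gauge s x := by
  rw [gauge_def, gauge_def]
  congr 1
  ext r
  refine and_congr_right fun hr => ?_
  constructor
  · rintro ⟨y, ⟨z, hz, rfl⟩, hy⟩
    have : A x = A (r • z) := by rw [← hy]; simp
    have hxz : x = r • z := A.injective this
    exact hxz ▸ Set.smul_mem_smul_set hz
  · rintro ⟨z, hz, rfl⟩
    refine ⟨A z, Set.mem_image_of_mem _ hz, ?_⟩
    simp

def sfun (p : Kn n → EucSp n) (L : Kn n) : ℝ :=
  gauge (shifted L) (p L - centroid L.toSet)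

lemma subset_toSet_of_closedBall_shifted (L : Kn n) {ρ : ℝ}
    (h : Metric.closedBall 0 ρ ⊆ shifted L) :
    Metric.closedBall (centroid L.toSet) ρ ⊆ L.toSet := by
  intro u hu
  have : u - centroid L.toSet ∈ Metric.closedBall (0 : EucSp n) ρ := by
    rw [Metric.mem_closedBall, dist_eq_norm, sub_zero]
    rw [Metric.mem_closedBall, dist_eq_norm] at hu
    exact hu
  have := h this
  rw [shifted_mem_iff, sub_add_cancel] at this
  exact this

lemma gauge_le_norm_div {S : Set (EucSp n)} {r : ℝ} (hr : 0 < r)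
    (h : Metric.closedBall 0 r ⊆ S) (x : EucSp n) : gauge S x ≤ ‖x‖ / r := by
  have habs : Absorbent ℝ (Metric.ball (0 : EucSp n) r) :=
    absorbent_nhds_zero (Metric.ball_mem_nhds _ hr)
  calc gauge S x ≤ gauge (Metric.ball (0 : EucSp n) r) x :=
        gauge_mono habs (Metric.ball_subset_closedBall.trans h) x
    _ = ‖x‖ / r := gauge_ball hr.le x

lemma gauge_sub_le {S : Set (EucSp n)} (hS : Convex ℝ S) {r : ℝ} (hr : 0 < r)
    (h : Metric.closedBall 0 r ⊆ S) (v w : EucSp n) :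
    gauge S v ≤ gauge S w + ‖v - w‖ / r := by
  have hnh : S ∈ nhds (0 : EucSp n) :=
    Filter.mem_of_superset (Metric.closedBall_mem_nhds _ hr) h
  have h1 : gauge S (w + (v - w)) ≤ gauge S w + gauge S (v - w) :=
    gauge_add_le hS (absorbent_nhds_zero hnh) w (v - w)
  have h2 : w + (v - w) = v := by abel
  rw [h2] at h1
  exact h1.trans (by linarith [gauge_le_norm_div hr h (v - w)])

lemma gauge_comp_le {S S' : Set (EucSp n)} (hS' : Convex ℝ S') {r d : ℝ}
    (hr : 0 < r) (hd : 0 ≤ d) (hbS : Metric.closedBall 0 r ⊆ S)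
    (hbS' : Metric.closedBall 0 r ⊆ S')
    (happ : ∀ u ∈ S, ∃ v ∈ S', ‖u - v‖ ≤ d) (w : EucSp n) :
    gauge S' w ≤ (1 + d / r) * gauge S w := by
  have hc : 0 < 1 + d / r := by positivity
  have key : ∀ ρ ∈ {t : ℝ | t ∈ Set.Ioi (0 : ℝ) ∧ w ∈ t • S},
      gauge S' w / (1 + d / r) ≤ ρ := by
    rintro ρ ⟨hρ, u, hu, rfl⟩
    have hρ0 : (0 : ℝ) < ρ := hρ
    obtain ⟨v, hv, hvd⟩ := happ u hu
    have h1 : gauge S' u ≤ 1 + d / r := by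
      have hsub := gauge_sub_le hS' hr hbS' u v
      have h2 : gauge S' v ≤ 1 := gauge_le_one_of_mem hv
      have h3 : ‖u - v‖ / r ≤ d / r := by gcongr
      linarith
    have h4 : gauge S' (ρ • u) = ρ * gauge S' u := by
      rw [gauge_smul_of_nonneg hρ0.le, smul_eq_mul]
    rw [div_le_iff₀ hc, h4]
    calc ρ * gauge S' u ≤ ρ * (1 + d / r) := by
          exact mul_le_mul_of_nonneg_left h1 hρ0.le
      _ = ρ * (1 + d / r) := rfl
  have hne : {t : ℝ | t ∈ Set.Ioi (0 : ℝ) ∧ w ∈ t • S}.Nonempty := by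
    set ρ := (‖w‖ + r) / r with hρdef
    have hρ0 : (0 : ℝ) < ρ := by positivity
    refine ⟨ρ, hρ0, ?_⟩
    refine Set.mem_smul_set.2 ⟨ρ⁻¹ • w, hbS ?_, by rw [smul_smul, mul_inv_cancel₀ hρ0.ne', one_smul]⟩
    rw [Metric.mem_closedBall, dist_eq_norm, sub_zero, norm_smul, norm_inv,
      Real.norm_eq_abs, abs_of_pos hρ0]
    rw [inv_mul_le_iff₀ hρ0]
    have h8 : ρ * r = ‖w‖ + r := by rw [hρdef, div_mul_cancel₀ _ hr.ne']
    linarith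
  have hle : gauge S' w / (1 + d / r) ≤ gauge S w := by
    rw [gauge_def]
    exact le_csInf hne key
  rw [div_le_iff₀ hc] at hle
  linarith [hle]

lemma shifted_affImage (T : EucSp n ≃ᵃ[ℝ] EucSp n) (L : Kn n) :
    shifted (affImage T L) = (T.linear : EucSp n → EucSp n) '' shifted L := by
  ext z
  rw [shifted_mem_iff, centroid_affImage, kn_toSet_affImage]
  constructor
  · rintro ⟨w, hw, hwz⟩
    refine ⟨w - centroid L.toSet, ?_, ?_⟩
    · rw [shifted_mem_iff, sub_add_cancel]; exact hw
    · have h1 : T.linear (w - centroid L.toSet) = T w - T (centroid L.toSet) := by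
        have := T.toAffineMap.linearMap_vsub w (centroid L.toSet)
        simpa [vsub_eq_sub] using this
      rw [h1, hwz]
      abel
  · rintro ⟨u, hu, rfl⟩
    rw [shifted_mem_iff] at hu
    refine ⟨u + centroid L.toSet, hu, ?_⟩
    have := T.map_vadd (centroid L.toSet) u
    simpa [vadd_eq_add] using this

lemma sfun_affImage {p : Kn n → EucSp n} (hp : IsAffineInvariantPoint p)
    (T : EucSp n ≃ᵃ[ℝ] EucSp n) (L : Kn n) : sfun p (affImage T L) = sfun p L := by
  unfold sfun
  rw [shifted_affImage, hp.2 T L, centroid_affImage]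
  have h1 : T (p L) - T (centroid L.toSet) = T.linear (p L - centroid L.toSet) := by
    have := T.toAffineMap.linearMap_vsub (p L) (centroid L.toSet)
    simpa [vsub_eq_sub] using this.symm
  rw [h1]
  exact gauge_image_linear T.linear _ _

lemma eventually_closedBall_subset_shifted (L₀ : Kn n) {r : ℝ} (hr : 0 < r)
    (hsub : Metric.closedBall 0 (2 * r) ⊆ shifted L₀) :
    ∀ᶠ L : Kn n in nhds L₀, Metric.closedBall 0 (r / 2) ⊆ shifted L := by
  have hL₀ : Metric.closedBall (centroid L₀.toSet) (2 * r) ⊆ L₀.toSet :=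
    subset_toSet_of_closedBall_shifted L₀ hsub
  have hd : ∀ᶠ L : Kn n in nhds L₀, dist L₀ L < r / 4 := by
    filter_upwards [Metric.ball_mem_nhds L₀ (by positivity : (0:ℝ) < r/4)] with L hL
    rw [dist_comm]; exact Metric.mem_ball.1 hL
  have hc : ∀ᶠ L : Kn n in nhds L₀,
      ‖centroid L.toSet - centroid L₀.toSet‖ < r / 4 := by
    have := Metric.tendsto_nhds.1 (continuous_centroid.tendsto L₀) (r/4) (by positivity)
    filter_upwards [this] with L hL
    rw [dist_eq_norm] at hL; exact hL
  filter_upwards [hd, hc] with L h2 h3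
  intro w hw
  rw [Metric.mem_closedBall, dist_eq_norm, sub_zero] at hw
  rw [shifted_mem_iff]
  set z := w + centroid L.toSet with hz
  have hzc : ‖z - centroid L₀.toSet‖ ≤ 3 * r / 4 := by
    have : z - centroid L₀.toSet = w + (centroid L.toSet - centroid L₀.toSet) := by
      rw [hz]; abel
    rw [this]
    calc ‖w + (centroid L.toSet - centroid L₀.toSet)‖
        ≤ ‖w‖ + ‖centroid L.toSet - centroid L₀.toSet‖ := norm_add_le _ _
      _ ≤ 3 * r / 4 := by linarith
  have hzball : Metric.closedBall z (r / 2) ⊆ L₀.toSet := by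
    refine (Metric.closedBall_subset_closedBall' ?_).trans hL₀
    rw [← dist_eq_norm] at hzc
    linarith
  refine mem_of_near (kn_convex L) (kn_isClosed L) (kn_nonempty L)
    (by positivity : (0:ℝ) < r/4) hzball (by linarith) ?_
  intro u hu
  have hd2 : Metric.hausdorffDist L₀.toSet L.toSet < r / 4 := by rwa [← kn_dist]
  exact Metric.exists_dist_lt_of_hausdorffDist_lt hu hd2 (kn_edist_ne_top L₀ L)

set_option maxHeartbeats 1000000 in
lemma continuous_sfun {p : Kn n → EucSp n} (hp : IsAffineInvariantPoint p) :
    Continuous (sfun p) := by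
  rw [continuous_iff_continuousAt]
  intro L₀
  set c₀ := centroid L₀.toSet with hc₀
  set y₀ := p L₀ - c₀ with hy₀
  obtain ⟨r0, hr0, hball⟩ := Metric.mem_nhds_iff.1 (shifted_mem_nhds_zero L₀)
  set r := r0 / 4 with hrdef
  have hrpos : (0 : ℝ) < r := by positivity
  have h2r : Metric.closedBall 0 (2 * r) ⊆ shifted L₀ :=
    (Metric.closedBall_subset_ball (by rw [hrdef]; linarith)).trans hball
  set ρ := r / 2 with hρdef
  have hρpos : (0 : ℝ) < ρ := by positivity
  have hb0 : Metric.closedBall 0 ρ ⊆ shifted L₀ :=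
    (Metric.closedBall_subset_closedBall (by rw [hρdef]; linarith)).trans h2r
  rw [ContinuousAt, Metric.tendsto_nhds]
  intro ε hε
  set M := ‖y₀‖ + 1 with hM
  have hM0 : 0 < M := by positivity
  have hy₀M : ‖y₀‖ ≤ M := by
    rw [hM]; linarith
  set B := (2 / ρ) * (2 * M / ρ + 1) with hB
  have hB0 : 0 < B := by positivity
  set δ := min (ρ / 2) (ε / (B + 1)) with hδdef
  have hδ0 : 0 < δ := lt_min (by positivity) (by positivity)
  have hδρ : δ ≤ ρ / 2 := min_le_left _ _
  have hδε : δ ≤ ε / (B + 1) := min_le_right _ _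
  -- eventual facts
  have F1 := eventually_closedBall_subset_shifted L₀ hrpos h2r
  have F2 : ∀ᶠ L : Kn n in nhds L₀, dist L₀ L < δ := by
    filter_upwards [Metric.ball_mem_nhds L₀ hδ0] with L hL
    rw [dist_comm]; exact Metric.mem_ball.1 hL
  have F3 : ∀ᶠ L : Kn n in nhds L₀, ‖centroid L.toSet - c₀‖ < δ := by
    have := Metric.tendsto_nhds.1 (continuous_centroid.tendsto L₀) δ hδ0
    filter_upwards [this] with L hL
    rw [dist_eq_norm] at hL; exact hL
  have F4 : ∀ᶠ L : Kn n in nhds L₀, ‖p L - p L₀‖ < δ := by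
    have := Metric.tendsto_nhds.1 (hp.1.tendsto L₀) δ hδ0
    filter_upwards [this] with L hL
    rw [dist_eq_norm] at hL; exact hL
  filter_upwards [F1, F2, F3, F4] with L h1 h2 h3 h4
  set cL := centroid L.toSet with hcL
  set yL := p L - cL with hyL
  have hbL : Metric.closedBall 0 ρ ⊆ shifted L := by rw [hρdef]; exact h1
  have hyy : ‖yL - y₀‖ ≤ 2 * δ := by
    have : yL - y₀ = (p L - p L₀) - (cL - c₀) := by rw [hyL, hy₀]; abel
    rw [this]
    calc ‖(p L - p L₀) - (cL - c₀)‖ ≤ ‖p L - p L₀‖ + ‖cL - c₀‖ := norm_sub_le _ _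
      _ ≤ 2 * δ := by linarith
  -- approximation conditions
  have hdLL : Metric.hausdorffDist L.toSet L₀.toSet < δ := by
    rw [← kn_dist, dist_comm]; exact h2
  have hdLL' : Metric.hausdorffDist L₀.toSet L.toSet < δ := by
    rw [← kn_dist]; exact h2
  have happ1 : ∀ u ∈ shifted L, ∃ v ∈ shifted L₀, ‖u - v‖ ≤ 2 * δ := by
    intro u hu
    rw [shifted_mem_iff] at hu
    obtain ⟨z, hz, hdz⟩ :=
      Metric.exists_dist_lt_of_hausdorffDist_lt hu hdLL (kn_edist_ne_top L L₀)
    refine ⟨z - c₀, by rw [shifted_mem_iff, sub_add_cancel]; exact hz, ?_⟩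
    have : u - (z - c₀) = (u + cL - z) - (cL - c₀) := by abel
    rw [this]
    calc ‖(u + cL - z) - (cL - c₀)‖ ≤ ‖u + cL - z‖ + ‖cL - c₀‖ := norm_sub_le _ _
      _ ≤ 2 * δ := by
          have e1 : ‖u + cL - z‖ = dist (u + cL) z := (dist_eq_norm _ _).symm
          rw [e1]
          linarith
  have happ2 : ∀ u ∈ shifted L₀, ∃ v ∈ shifted L, ‖u - v‖ ≤ 2 * δ := by
    intro u hu
    rw [shifted_mem_iff] at hu
    obtain ⟨z, hz, hdz⟩ :=
      Metric.exists_dist_lt_of_hausdorffDist_lt hu hdLL' (kn_edist_ne_top L₀ L)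
    refine ⟨z - cL, by rw [shifted_mem_iff, sub_add_cancel]; exact hz, ?_⟩
    have : u - (z - cL) = (u + c₀ - z) - (c₀ - cL) := by abel
    rw [this]
    calc ‖(u + c₀ - z) - (c₀ - cL)‖ ≤ ‖u + c₀ - z‖ + ‖c₀ - cL‖ := norm_sub_le _ _
      _ ≤ 2 * δ := by
          have e1 : ‖u + c₀ - z‖ = dist (u + c₀) z := (dist_eq_norm _ _).symm
          have e2 : ‖c₀ - cL‖ = ‖cL - c₀‖ := norm_sub_rev _ _
          rw [e1, e2]
          linarith
  have hd20 : (0 : ℝ) ≤ 2 * δ := by linarith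
  set P := 2 * δ / ρ with hP
  have hP0 : 0 ≤ P := by positivity
  have hP1 : P ≤ 1 := by
    rw [hP, div_le_one hρpos]; linarith
  have f3 : gauge (shifted L) y₀ ≤ (1 + P) * gauge (shifted L₀) y₀ :=
    gauge_comp_le (shifted_convex L) hρpos hd20 hb0 hbL happ2 y₀
  have f4 : gauge (shifted L₀) y₀ ≤ (1 + P) * gauge (shifted L) y₀ :=
    gauge_comp_le (shifted_convex L₀) hρpos hd20 hbL hb0 happ1 y₀
  have f1 : gauge (shifted L) yL ≤ gauge (shifted L) y₀ + P := by
    have := gauge_sub_le (shifted_convex L) hρpos hbL yL y₀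
    have h5 : ‖yL - y₀‖ / ρ ≤ P := by rw [hP]; gcongr
    linarith
  have f2 : gauge (shifted L) y₀ ≤ gauge (shifted L) yL + P := by
    have := gauge_sub_le (shifted_convex L) hρpos hbL y₀ yL
    have h5 : ‖y₀ - yL‖ / ρ ≤ P := by
      rw [hP, norm_sub_rev]; gcongr
    linarith
  have hgG : gauge (shifted L₀) y₀ ≤ M / ρ := by
    have := gauge_le_norm_div hρpos hb0 y₀
    have h5 : ‖y₀‖ / ρ ≤ M / ρ := by gcongr
    linarith
  set a := gauge (shifted L) yL with ha
  set b := gauge (shifted L) y₀ with hb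
  set g := gauge (shifted L₀) y₀ with hgg
  have hg0 : 0 ≤ g := gauge_nonneg _
  have hb0' : 0 ≤ b := gauge_nonneg _
  have ha0 : 0 ≤ a := gauge_nonneg _
  have hPg : P * g ≤ P * (M / ρ) := mul_le_mul_of_nonneg_left hgG hP0
  have hPb : P * b ≤ P * ((1 + P) * g) := mul_le_mul_of_nonneg_left f3 hP0
  have hsfL : sfun p L = a := rfl
  have hsfL₀ : sfun p L₀ = g := rfl
  have hMρ : 0 < M / ρ := by positivity
  clear_value a b g P δ B M ρ
  have hkey : |a - g| ≤ δ * B := by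
    have hchain1 : a - g ≤ P * (M / ρ) + P := by nlinarith
    have hchain2 : g - a ≤ 2 * (P * (M / ρ)) + P := by nlinarith
    have hPδB : P * (2 * (M / ρ) + 1) = δ * B := by
      rw [hP, hB]; field_simp
    rw [abs_sub_le_iff]
    constructor <;> nlinarith
  have hfin : δ * B < ε := by
    have h6 : δ * (B + 1) ≤ ε := by
      rw [← le_div_iff₀ (by positivity : (0:ℝ) < B + 1)]
      exact hδε
    nlinarith
  show dist (sfun p L) (sfun p L₀) < ε
  rw [Real.dist_eq, hsfL, hsfL₀]
  exact hkey.trans_lt hfin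

lemma mem_interior_of_gauge_lt_one (L : Kn n) {v : EucSp n}
    (h : gauge (shifted L) v < 1) : v + centroid L.toSet ∈ interior L.toSet := by
  have := (gauge_lt_one_iff_mem_interior (shifted_convex L) (shifted_mem_nhds_zero L)).1 h
  have heq : shifted L = (Homeomorph.addRight (centroid L.toSet)) ⁻¹' L.toSet := rfl
  rw [heq, ← Homeomorph.preimage_interior] at this
  exact this

lemma gauge_lt_one_of_mem_interior (L : Kn n) {v : EucSp n}
    (h : v + centroid L.toSet ∈ interior L.toSet) : gauge (shifted L) v < 1 := by
  rw [gauge_lt_one_iff_mem_interior (shifted_convex L) (shifted_mem_nhds_zero L)]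
  have heq : shifted L = (Homeomorph.addRight (centroid L.toSet)) ⁻¹' L.toSet := rfl
  rw [heq, ← Homeomorph.preimage_interior]
  exact h

end Stmt17

end Aux

/-- For `K ∈ 𝒦ₙ`, every point `x` of the interior of `K ∩ 𝔓ₙ(K)` relative to
the affine subspace `𝔓ₙ(K)` is of the form `x = q(K)` for some proper affine invariant
point `q`. -/
theorem statement17 (n : ℕ) (K : Kn n) (x : EucSp n)
    (hxK : x ∈ K.toSet) (hxP : x ∈ PnSet n K)
    (hrel : ∃ ε : ℝ, 0 < ε ∧ ∀ y ∈ PnSet n K, dist y x < ε → y ∈ K.toSet) :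
    ∃ q : Kn n → EucSp n, IsAffineInvariantPoint q ∧
      (∀ L : Kn n, q L ∈ interior L.toSet) ∧ q K = x := by
  classical
  obtain ⟨p, hp, hpK⟩ := hxP
  obtain ⟨ε, hε, hballP⟩ := hrel
  have hlinsub : ∀ (T : EucSp n ≃ᵃ[ℝ] EucSp n) (u v : EucSp n),
      T u - T v = T.linear (u - v) := by
    intro T u v
    have := T.toAffineMap.linearMap_vsub u v
    simpa [vsub_eq_sub] using this.symm
  have hTadd : ∀ (T : EucSp n ≃ᵃ[ℝ] EucSp n) (u w : EucSp n),
      T (u + w) = T u + T.linear w := by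
    intro T u w
    have := T.map_vadd u w
    rw [vadd_eq_add, vadd_eq_add] at this
    rw [add_comm u w, this, add_comm]
  -- Step 1 : x lies in the interior of K
  have hxint : x ∈ interior K.toSet := by
    by_cases hxg : x = centroid K.toSet
    · rw [hxg]; exact Stmt17.centroid_mem_interior K
    · have hng : 0 < ‖x - centroid K.toSet‖ := by
        rw [norm_pos_iff, sub_ne_zero]; exact hxg
      set t := ε / (2 * ‖x - centroid K.toSet‖) with htdef
      have ht : 0 < t := by positivity
      set p' := fun L : Kn n => p L + t • (p L - centroid L.toSet) with hp'def
      have hp'aip : IsAffineInvariantPoint p' := by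
        constructor
        · exact hp.1.add ((hp.1.sub Stmt17.continuous_centroid).const_smul t)
        · intro T L
          show p (affImage T L) + t • (p (affImage T L) - centroid (affImage T L).toSet)
              = T (p L + t • (p L - centroid L.toSet))
          rw [hp.2 T L, Stmt17.centroid_affImage T L, hlinsub T (p L) (centroid L.toSet),
            hTadd T (p L) (t • (p L - centroid L.toSet))]
          simp
      have hp'K : p' K = x + t • (x - centroid K.toSet) := by
        show p K + t • (p K - centroid K.toSet) = _
        rw [hpK]
      have hx' : p' K ∈ K.toSet := by
        apply hballP _ ⟨p', hp'aip, rfl⟩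
        rw [hp'K, dist_eq_norm]
        have h9 : x + t • (x - centroid K.toSet) - x = t • (x - centroid K.toSet) := by abel
        rw [h9, norm_smul, Real.norm_eq_abs, abs_of_pos ht, htdef]
        have h10 : ε / (2 * ‖x - centroid K.toSet‖) * ‖x - centroid K.toSet‖ = ε / 2 := by
          field_simp
        rw [h10]; linarith
      have h1t : (0:ℝ) < 1 + t := by linarith
      have hcomb : (t/(1+t)) • centroid K.toSet + (1/(1+t)) • (p' K) = x := by
        rw [hp'K]
        match_scalars <;> field_simp <;> ring
      have hmem := (Stmt17.kn_convex K).combo_interior_closure_mem_interior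
        (Stmt17.centroid_mem_interior K) (subset_closure hx')
        (a := t/(1+t)) (b := 1/(1+t)) (by positivity) (by positivity)
        (by field_simp; ring)
      rwa [hcomb] at hmem
  -- Step 2 : construct the proper affine invariant point
  set s₀ := Stmt17.sfun p K with hs₀def
  have hs₀lt : s₀ < 1 := by
    rw [hs₀def]
    have : p K - centroid K.toSet + centroid K.toSet ∈ interior K.toSet := by
      rw [sub_add_cancel, hpK]; exact hxint
    exact Stmt17.gauge_lt_one_of_mem_interior K this
  have hs₀0 : 0 ≤ s₀ := gauge_nonneg _
  set a := (1 + s₀) / 2 with hadef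
  have ha0 : 0 < a := by rw [hadef]; linarith
  have ha1 : a < 1 := by rw [hadef]; linarith
  have hs₀a : s₀ < a := by rw [hadef]; linarith
  have hmax : ∀ L : Kn n, 0 < max a (Stmt17.sfun p L) :=
    fun L => lt_of_lt_of_le ha0 (le_max_left _ _)
  set θ := fun L : Kn n => a / max a (Stmt17.sfun p L) with hθdef
  have hθ0 : ∀ L, 0 ≤ θ L := fun L => div_nonneg ha0.le (hmax L).le
  have hθmul : ∀ L, θ L * Stmt17.sfun p L ≤ a := by
    intro L
    rcases le_or_gt (Stmt17.sfun p L) a with h | h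
    · have : θ L = 1 := by
        rw [hθdef]
        simp only
        rw [max_eq_left h, div_self ha0.ne']
      rw [this, one_mul]; exact h
    · have hsne : Stmt17.sfun p L ≠ 0 := by
        intro h0; rw [h0] at h; linarith
      have : θ L = a / Stmt17.sfun p L := by
        rw [hθdef]; simp only; rw [max_eq_right h.le]
      rw [this, div_mul_cancel₀ _ hsne]
  refine ⟨fun L => centroid L.toSet + θ L • (p L - centroid L.toSet), ⟨?_, ?_⟩, ?_, ?_⟩
  · -- continuity
    have hθcont : Continuous θ := by
      rw [hθdef]
      exact continuous_const.div (continuous_const.max (Stmt17.continuous_sfun hp))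
        (fun L => (hmax L).ne')
    exact Stmt17.continuous_centroid.add
      (hθcont.smul (hp.1.sub Stmt17.continuous_centroid))
  · -- affine invariance
    intro T L
    show centroid (affImage T L).toSet +
        θ (affImage T L) • (p (affImage T L) - centroid (affImage T L).toSet)
        = T (centroid L.toSet + θ L • (p L - centroid L.toSet))
    have hθT : θ (affImage T L) = θ L := by
      rw [hθdef]; simp only; rw [Stmt17.sfun_affImage hp T L]
    rw [hθT, Stmt17.centroid_affImage T L, hp.2 T L,
      hlinsub T (p L) (centroid L.toSet),
      hTadd T (centroid L.toSet) (θ L • (p L - centroid L.toSet))]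
    simp
  · -- properness
    intro L
    have hglt : gauge (Stmt17.shifted L) (θ L • (p L - centroid L.toSet)) < 1 := by
      rw [gauge_smul_of_nonneg (hθ0 L), smul_eq_mul]
      exact lt_of_le_of_lt (hθmul L) ha1
    have := Stmt17.mem_interior_of_gauge_lt_one L hglt
    show centroid L.toSet + θ L • (p L - centroid L.toSet) ∈ interior L.toSet
    rw [add_comm]
    exact this
  · -- value at K
    show centroid K.toSet + θ K • (p K - centroid K.toSet) = x
    have hθK : θ K = 1 := by
      rw [hθdef]
      simp only
      rw [← hs₀def, max_eq_left hs₀a.le, div_self ha0.ne']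
    rw [hθK, one_smul, hpK]
    abel
end
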